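/- arXiv:1712.00320 — 4 statements merged into one kernel-verified Lean document; each statement's English description precedes it below -/
import Mathlib

section
/- Let s ∈ (0,1), n ≥ 1, r > 0, and for δ > 0 consider the integral I(δ) = ∫_{B_r((r+δ)e₁)} |w|^{−(n+2s)} dw. Then δ^{2s} · I(δ) converges, as δ → 0⁺, to ∫_{{ξ₁ > 1}} |ξ|^{−(n+2s)} dξ, which is a finite positive constant. Consequently there exist c > 0 and δ₀ > 0 such that I(δ) ≥ c · δ^{−2s} for all δ ∈ (0, δ₀). -/
open MeasureTheory Metric Set Filter
open scoped RealInnerProductSpace Pointwise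

section Aux

variable {n : ℕ}

private noncomputable def ee (i0 : Fin n) : EuclideanSpace ℝ (Fin n) :=
  EuclideanSpace.single i0 (1:ℝ)

private lemma coord_eq_inner (i0 : Fin n) (x : EuclideanSpace ℝ (Fin n)) :
    x i0 = ⟪ee i0, x⟫ := by
  simp [ee, EuclideanSpace.inner_single_left]

private lemma abs_coord_le (i0 : Fin n) (x : EuclideanSpace ℝ (Fin n)) : |x i0| ≤ ‖x‖ := by
  rw [coord_eq_inner i0 x]
  calc |⟪ee i0, x⟫| ≤ ‖ee i0‖ * ‖x‖ := abs_real_inner_le_norm _ _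
    _ = ‖x‖ := by simp [ee]

private lemma hyperplane_null (i0 : Fin n) (c : ℝ) :
    volume {ξ : EuclideanSpace ℝ (Fin n) | ξ i0 = c} = 0 := by
  classical
  let K : Submodule ℝ (EuclideanSpace ℝ (Fin n)) :=
    { carrier := {z | z i0 = 0}
      add_mem' := by
        intro a b ha hb
        simp only [Set.mem_setOf_eq] at *
        simp [PiLp.add_apply, ha, hb]
      zero_mem' := by simp [Set.mem_setOf_eq]
      smul_mem' := by
        intro t z hz
        simp only [Set.mem_setOf_eq] at *
        simp [PiLp.smul_apply, hz] }
  have hK : volume (K : Set (EuclideanSpace ℝ (Fin n))) = 0 := by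
    refine Measure.addHaar_submodule volume K ?_
    intro h
    have hmem : ee i0 ∈ K := h ▸ Submodule.mem_top
    have : (ee i0) i0 = 0 := hmem
    simp [ee, EuclideanSpace.single_apply] at this
  have hset : {ξ : EuclideanSpace ℝ (Fin n) | ξ i0 = c}
      = (fun ξ => -(c • ee i0) + ξ) ⁻¹' (K : Set (EuclideanSpace ℝ (Fin n))) := by
    ext ξ
    have h1 : ((-(c • ee i0) + ξ) : EuclideanSpace ℝ (Fin n)) i0 = -(c * 1) + ξ i0 := by
      simp [PiLp.add_apply, PiLp.neg_apply, PiLp.smul_apply, ee, EuclideanSpace.single_apply]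
    constructor
    · intro hξ
      show ((-(c • ee i0) + ξ) : EuclideanSpace ℝ (Fin n)) i0 = 0
      rw [h1]; simp only [Set.mem_setOf_eq] at hξ; rw [hξ]; ring
    · intro hξ
      have : ((-(c • ee i0) + ξ) : EuclideanSpace ℝ (Fin n)) i0 = 0 := hξ
      rw [h1] at this
      show ξ i0 = c
      linarith
  rw [hset, measure_preimage_add, hK]

end Aux

/-- With I(δ) = ∫_{B_r((r+δ)e₁)} |w|^{−(n+2s)} dw, the quantity
δ^{2s}·I(δ) converges as δ → 0⁺ to ∫_{{ξ₁>1}} |ξ|^{−(n+2s)} dξ, a finite positive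
constant; consequently I(δ) ≥ c·δ^{−2s} for small δ. -/
theorem stmt4 {n : ℕ} (hn : 0 < n) (s : ℝ) (hs : s ∈ Set.Ioo (0:ℝ) 1)
    (r : ℝ) (hr : 0 < r)
    (I : ℝ → ℝ)
    (hI : ∀ δ : ℝ, I δ =
      ∫ w in Metric.ball ((r + δ) • EuclideanSpace.single (⟨0, hn⟩ : Fin n) (1:ℝ)) r,
        ‖w‖ ^ (-((n : ℝ) + 2*s))) :
    Filter.Tendsto (fun δ : ℝ => δ ^ (2*s) * I δ) (nhdsWithin 0 (Set.Ioi 0))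
      (nhds (∫ ξ in {ξ : EuclideanSpace ℝ (Fin n) | 1 < ξ ⟨0, hn⟩},
        ‖ξ‖ ^ (-((n : ℝ) + 2*s)))) ∧
    (0 < ∫ ξ in {ξ : EuclideanSpace ℝ (Fin n) | 1 < ξ ⟨0, hn⟩},
        ‖ξ‖ ^ (-((n : ℝ) + 2*s))) ∧
    MeasureTheory.IntegrableOn
      (fun ξ : EuclideanSpace ℝ (Fin n) => ‖ξ‖ ^ (-((n : ℝ) + 2*s)))
      {ξ : EuclideanSpace ℝ (Fin n) | 1 < ξ ⟨0, hn⟩} ∧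
    ∃ c > 0, ∃ δ₀ > 0, ∀ δ ∈ Set.Ioo (0:ℝ) δ₀, c * δ ^ (-(2*s)) ≤ I δ := by
  classical
  obtain ⟨hs0, hs1⟩ := hs
  set i0 : Fin n := ⟨0, hn⟩ with hi0
  set p : ℝ := (n : ℝ) + 2*s with hp
  have hp_pos : 0 < p := by positivity
  have hnp : (n : ℝ) < p := by simp only [hp]; linarith
  set f : EuclideanSpace ℝ (Fin n) → ℝ := fun ξ => ‖ξ‖ ^ (-p) with hfdef
  set H : Set (EuclideanSpace ℝ (Fin n)) := {ξ | 1 < ξ i0} with hHdef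
  have hfinrank : Module.finrank ℝ (EuclideanSpace ℝ (Fin n)) = n := finrank_euclideanSpace_fin
  have hf_nonneg : ∀ ξ, 0 ≤ f ξ := fun ξ => Real.rpow_nonneg (norm_nonneg _) _
  have hf_meas : Measurable f := by fun_prop
  -- norm bound on H
  have hnormH : ∀ ξ ∈ H, 1 < ‖ξ‖ := by
    intro ξ hξ
    have h1 : (1:ℝ) < ξ i0 := hξ
    calc (1:ℝ) < ξ i0 := h1
      _ ≤ |ξ i0| := le_abs_self _
      _ ≤ ‖ξ‖ := abs_coord_le i0 ξ
  have hHopen : IsOpen H := by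
    have : H = (fun ξ : EuclideanSpace ℝ (Fin n) => ⟪ee i0, ξ⟫) ⁻¹' (Set.Ioi 1) := by
      ext ξ
      simp only [Set.mem_setOf_eq, Set.mem_preimage, Set.mem_Ioi, ← coord_eq_inner]
      exact Iff.rfl
    rw [this]
    exact isOpen_Ioi.preimage (continuous_const.inner continuous_id)
  have hHmeas : MeasurableSet H := hHopen.measurableSet
  -- integrability on H
  have hInt : IntegrableOn f H := by
    have hbig : Integrable (fun x : EuclideanSpace ℝ (Fin n) =>
        (2:ℝ) ^ p * (1 + ‖x‖) ^ (-p)) volume := by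
      refine Integrable.const_mul ?_ _
      exact integrable_one_add_norm (by rw [hfinrank]; exact hnp)
    refine (hbig.restrict (s := H)).mono' hf_meas.aestronglyMeasurable ?_
    rw [ae_restrict_iff' hHmeas]
    refine Filter.Eventually.of_forall fun ξ hξ => ?_
    have h1 : (1:ℝ) < ‖ξ‖ := hnormH ξ hξ
    have h0 : (0:ℝ) < ‖ξ‖ := by linarith
    rw [Real.norm_of_nonneg (hf_nonneg ξ)]
    have key : ((1 + ‖ξ‖)/2) ^ (-p) = (2:ℝ) ^ p * (1 + ‖ξ‖) ^ (-p) := by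
      rw [Real.div_rpow (by positivity) (by norm_num), Real.rpow_neg (by norm_num : (0:ℝ) ≤ 2),
        div_inv_eq_mul, mul_comm]
    refine le_trans ?_ key.le
    refine Real.rpow_le_rpow_of_nonpos (by positivity) (by linarith) (by linarith)
  -- positivity of the limit
  have hL_pos : 0 < ∫ ξ in H, f ξ := by
    rw [setIntegral_pos_iff_support_of_nonneg_ae
      (Filter.Eventually.of_forall fun ξ => hf_nonneg ξ) hInt]
    have hsub : H ⊆ Function.support f ∩ H := by
      intro ξ hξ
      refine ⟨?_, hξ⟩
      have h0 : (0:ℝ) < ‖ξ‖ := lt_trans one_pos (hnormH ξ hξ)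
      exact ne_of_gt (Real.rpow_pos_of_pos h0 _)
    refine lt_of_lt_of_le ?_ (measure_mono hsub)
    refine hHopen.measure_pos volume ⟨(2:ℝ) • ee i0, ?_⟩
    show (1:ℝ) < ((2:ℝ) • ee i0) i0
    simp [ee, PiLp.smul_apply, EuclideanSpace.single_apply]
  -- the scaled balls
  set Eδ : ℝ → Set (EuclideanSpace ℝ (Fin n)) :=
    fun δ => Metric.ball (((r + δ)/δ) • ee i0) (r/δ) with hEδ
  have hEsub : ∀ δ : ℝ, 0 < δ → Eδ δ ⊆ H := by
    intro δ hδ ξ hξ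
    rw [hEδ, Metric.mem_ball, dist_eq_norm] at hξ
    have hc : ((ξ - ((r + δ)/δ) • ee i0 : EuclideanSpace ℝ (Fin n))) i0
        = ξ i0 - (r + δ)/δ := by
      simp [PiLp.sub_apply, PiLp.smul_apply, ee, EuclideanSpace.single_apply]
    have habs : |ξ i0 - (r + δ)/δ| < r/δ := by
      rw [← hc]
      exact lt_of_le_of_lt (abs_coord_le i0 _) hξ
    rw [abs_lt] at habs
    show (1:ℝ) < ξ i0
    have h1 : (r + δ)/δ - r/δ = 1 := by field_simp; ring
    nlinarith [habs.1]
  -- change of variables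
  have hscale : ∀ δ : ℝ, 0 < δ → δ ^ (2*s) * I δ = ∫ ξ in Eδ δ, f ξ := by
    intro δ hδ
    have hδn : (0:ℝ) < δ ^ n := pow_pos hδ n
    have hsmulset : δ • Eδ δ
        = Metric.ball ((r + δ) • EuclideanSpace.single i0 (1:ℝ)) r := by
      show δ • Metric.ball (((r + δ)/δ) • ee i0) (r/δ)
          = Metric.ball ((r + δ) • EuclideanSpace.single i0 (1:ℝ)) r
      rw [_root_.smul_ball hδ.ne', smul_smul, Real.norm_eq_abs, abs_of_pos hδ]
      have h1 : δ * ((r + δ)/δ) = r + δ := by field_simp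
      have h2 : δ * (r/δ) = r := by field_simp
      rw [h1, h2]
      rfl
    have h1 : ∫ ξ in Eδ δ, f (δ • ξ) = (δ ^ n)⁻¹ * I δ := by
      rw [Measure.setIntegral_comp_smul_of_pos volume f (Eδ δ) hδ, hfinrank, hsmulset,
        hI δ]
      rw [smul_eq_mul]
    have h2 : ∫ ξ in Eδ δ, f (δ • ξ) = δ ^ (-p) * ∫ ξ in Eδ δ, f ξ := by
      rw [← integral_const_mul]
      refine setIntegral_congr_fun (measurableSet_ball) fun ξ _ => ?_
      show ‖δ • ξ‖ ^ (-p) = δ ^ (-p) * ‖ξ‖ ^ (-p)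
      rw [norm_smul, Real.norm_of_nonneg hδ.le, Real.mul_rpow hδ.le (norm_nonneg _)]
    have hδp : (0:ℝ) < δ ^ (-p) := Real.rpow_pos_of_pos hδ _
    have h3 : ∫ ξ in Eδ δ, f ξ = δ ^ p * ((δ ^ n)⁻¹ * I δ) := by
      have := h1.symm.trans h2
      have h4 : δ ^ p * (δ ^ (-p) * ∫ ξ in Eδ δ, f ξ) = δ ^ p * ((δ ^ n)⁻¹ * I δ) := by
        rw [this]
      rw [← h4, ← mul_assoc, ← Real.rpow_add hδ]
      simp
    rw [h3]
    have h5 : δ ^ p = δ ^ n * δ ^ (2*s) := by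
      rw [hp, Real.rpow_add hδ, Real.rpow_natCast]
    rw [h5]
    field_simp
  -- tendsto r/δ → ∞
  have hRinf : Tendsto (fun δ : ℝ => r/δ) (nhdsWithin 0 (Set.Ioi 0)) atTop := by
    have := tendsto_inv_nhdsGT_zero (𝕜 := ℝ)
    have h := this.const_mul_atTop hr
    refine h.congr fun δ => ?_
    rw [div_eq_mul_inv]
  -- dominated convergence
  have htendsto : Tendsto (fun δ : ℝ => ∫ ξ in Eδ δ, f ξ) (nhdsWithin 0 (Set.Ioi 0))
      (nhds (∫ ξ in H, f ξ)) := by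
    have heq1 : ∀ δ : ℝ, ∫ ξ in Eδ δ, f ξ = ∫ ξ, (Eδ δ).indicator f ξ := by
      intro δ; rw [integral_indicator measurableSet_ball]
    have heq2 : ∫ ξ in H, f ξ = ∫ ξ, H.indicator f ξ := by
      rw [integral_indicator hHmeas]
    rw [heq2]
    simp only [heq1]
    refine tendsto_integral_filter_of_dominated_convergence (H.indicator f)
      (Filter.Eventually.of_forall fun δ =>
        (hf_meas.indicator measurableSet_ball).aestronglyMeasurable) ?_ ?_ ?_
    · filter_upwards [self_mem_nhdsWithin] with δ hδ
      refine Filter.Eventually.of_forall fun ξ => ?_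
      by_cases hmem : ξ ∈ Eδ δ
      · rw [Set.indicator_of_mem hmem, Set.indicator_of_mem (hEsub δ hδ hmem),
          Real.norm_of_nonneg (hf_nonneg ξ)]
      · rw [Set.indicator_of_notMem hmem]
        simpa using Set.indicator_nonneg (fun ξ _ => hf_nonneg ξ) ξ
    · exact (integrable_indicator_iff hHmeas).mpr hInt
    · have hnull : volume {ξ : EuclideanSpace ℝ (Fin n) | ξ i0 = 1} = 0 :=
        hyperplane_null i0 1
      have hae : ∀ᵐ ξ : EuclideanSpace ℝ (Fin n), ξ i0 ≠ 1 := by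
        rw [ae_iff]
        simpa using hnull
      filter_upwards [hae] with ξ hξ
      rcases lt_or_gt_of_ne hξ with hlt | hgt
      · -- ξ ∉ H
        have hnotH : ξ ∉ H := by
          intro h; exact absurd (show (1:ℝ) < ξ i0 from h) (not_lt.mpr hlt.le)
        rw [Set.indicator_of_notMem hnotH]
        refine Tendsto.congr' ?_ tendsto_const_nhds
        filter_upwards [self_mem_nhdsWithin] with δ hδ
        have : ξ ∉ Eδ δ := fun hmem => hnotH (hEsub δ hδ hmem)
        rw [Set.indicator_of_notMem this]
      · -- 1 < ξ i0 : eventually ξ ∈ Eδ δ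
        have hmemH : ξ ∈ H := hgt
        rw [Set.indicator_of_mem hmemH]
        refine Tendsto.congr' ?_ tendsto_const_nhds
        have ht : (0:ℝ) < ξ i0 - 1 := by linarith
        set A : ℝ := max 0 ((‖ξ‖^2 + 1 - 2 * ξ i0)/(2*(ξ i0 - 1))) with hA
        filter_upwards [hRinf.eventually_gt_atTop A, self_mem_nhdsWithin] with δ hδA hδ
        have hδpos : (0:ℝ) < δ := hδ
        set R : ℝ := r/δ with hR
        have hRpos : 0 < R := div_pos hr hδpos
        have hkey : 2*R*(ξ i0 - 1) > ‖ξ‖^2 + 1 - 2 * ξ i0 := by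
          have h1 : (‖ξ‖^2 + 1 - 2 * ξ i0)/(2*(ξ i0 - 1)) ≤ A := le_max_right _ _
          have h2 : A < R := hδA
          have := (div_lt_iff₀ (by linarith : (0:ℝ) < 2*(ξ i0 - 1))).mp (lt_of_le_of_lt h1 h2)
          nlinarith
        have hmem : ξ ∈ Eδ δ := by
          rw [hEδ, Metric.mem_ball, dist_eq_norm]
          have hcr : (r + δ)/δ = R + 1 := by rw [hR, add_div, div_self hδpos.ne']
          rw [hcr]
          have hinner : ⟪ξ, (R+1) • ee i0⟫ = (R+1) * ξ i0 := by
            rw [real_inner_smul_right, real_inner_comm, ← coord_eq_inner]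
          have hnrm : ‖((R+1) • ee i0 : EuclideanSpace ℝ (Fin n))‖ = R + 1 := by
            rw [norm_smul]
            simp [ee, Real.norm_of_nonneg (show (0:ℝ) ≤ R + 1 by linarith)]
          have hsq : ‖ξ - (R+1) • ee i0‖^2 = ‖ξ‖^2 - 2*((R+1) * ξ i0) + (R+1)^2 := by
            rw [norm_sub_sq_real, hinner, hnrm]
          have hlt2 : ‖ξ - (R+1) • ee i0‖^2 < R^2 := by
            rw [hsq]; nlinarith
          exact lt_of_pow_lt_pow_left₀ 2 hRpos.le hlt2
        symm
        rw [Set.indicator_of_mem hmem]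
  have htendstoI : Filter.Tendsto (fun δ : ℝ => δ ^ (2*s) * I δ)
      (nhdsWithin 0 (Set.Ioi 0)) (nhds (∫ ξ in H, f ξ)) := by
    refine htendsto.congr' ?_
    filter_upwards [self_mem_nhdsWithin] with δ hδ
    exact (hscale δ hδ).symm
  refine ⟨htendstoI, hL_pos, hInt, ?_⟩
  -- final consequence
  set L : ℝ := ∫ ξ in H, f ξ with hL
  have hev : ∀ᶠ δ in nhdsWithin (0:ℝ) (Set.Ioi 0), L/2 < δ ^ (2*s) * I δ :=
    htendstoI.eventually (eventually_gt_nhds (by linarith))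
  have hev2 := hev.and self_mem_nhdsWithin
  rw [Filter.eventually_iff, mem_nhdsGT_iff_exists_Ioo_subset] at hev2
  obtain ⟨δ₀, hδ₀, hsub2⟩ := hev2
  refine ⟨L/2, by linarith, δ₀, hδ₀, ?_⟩
  intro δ hδ
  obtain ⟨h1, h2⟩ := hsub2 hδ
  have hδpos : (0:ℝ) < δ := hδ.1
  have hx : (0:ℝ) < δ ^ (2*s) := Real.rpow_pos_of_pos hδpos _
  rw [Real.rpow_neg hδpos.le]
  calc L/2 * (δ ^ (2*s))⁻¹ ≤ (δ ^ (2*s) * I δ) * (δ ^ (2*s))⁻¹ :=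
        mul_le_mul_of_nonneg_right h1.le (inv_nonneg.mpr hx.le)
    _ = I δ := by field_simp
end

section
/- Let Ω ⊂ ℝⁿ be open, bounded, with C^{1,1} boundary (hence satisfying a uniform interior sphere condition), and s ∈ (0,1). Then there exists c > 0 such that for all z ∈ ℝⁿ \ closure(Ω): (1/c)·min(d(z)^{−2s}, d(z)^{−(n+2s)}) ≤ ∫_Ω |z−w|^{−(n+2s)} dw ≤ c·min(d(z)^{−2s}, d(z)^{−(n+2s)}), where d(z) = dist(z, ∂Ω). -/
open MeasureTheory Metric Set FiniteDimensional Pointwise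

variable {n : ℕ}

local notation "E" => EuclideanSpace ℝ (Fin n)

lemma aux_int {α : ℝ} (hα : (n : ℝ) < α) (z : EuclideanSpace ℝ (Fin n)) {d : ℝ} (hd : 0 < d) :
    IntegrableOn (fun w : EuclideanSpace ℝ (Fin n) => ‖z - w‖ ^ (-α)) (Metric.ball z d)ᶜ volume := by
  have hα0 : 0 < α := lt_of_le_of_lt (Nat.cast_nonneg n) hα
  have hdom : Integrable (fun w : E => (1 + 1/d) ^ α * (1 + ‖w - z‖) ^ (-α)) volume := by
    have h1 : Integrable (fun x : E => (1 + ‖x‖) ^ (-α)) volume :=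
      integrable_one_add_norm (by rw [finrank_euclideanSpace_fin]; exact hα)
    exact (h1.comp_sub_right z).const_mul _
  refine Integrable.mono hdom.restrict ?_ ?_
  · exact (Measurable.aestronglyMeasurable (by fun_prop))
  · rw [ae_restrict_iff' measurableSet_ball.compl]
    refine ae_of_all _ fun w hw => ?_
    have hm : d ≤ ‖w - z‖ := by
      have := mem_compl_iff _ _ |>.mp hw
      rw [mem_ball, dist_eq_norm] at this
      linarith [not_lt.mp this]
    have hm0 : 0 < ‖w - z‖ := lt_of_lt_of_le hd hm
    have hb : (0:ℝ) < 1 + 1/d := by positivity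
    have h1 : 1 + ‖w - z‖ ≤ (1 + 1/d) * ‖w - z‖ := by
      have : 1 ≤ ‖w - z‖ / d := (one_le_div hd).mpr hm
      have h2 : (1 + 1/d) * ‖w - z‖ = ‖w - z‖ + ‖w - z‖ / d := by ring
      linarith
    have h2 : ((1 + 1/d) * ‖w - z‖) ^ (-α) ≤ (1 + ‖w - z‖) ^ (-α) :=
      Real.rpow_le_rpow_of_nonpos (by positivity) h1 (neg_nonpos.mpr hα0.le)
    have h3 : ((1 + 1/d) * ‖w - z‖) ^ (-α) = (1 + 1/d) ^ (-α) * ‖w - z‖ ^ (-α) :=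
      Real.mul_rpow hb.le (norm_nonneg _)
    have key : ‖w - z‖ ^ (-α) ≤ (1 + 1/d) ^ α * (1 + ‖w - z‖) ^ (-α) := by
      calc ‖w - z‖ ^ (-α) = (1 + 1/d) ^ α * ((1 + 1/d) ^ (-α) * ‖w - z‖ ^ (-α)) := by
            rw [← mul_assoc, ← Real.rpow_add hb, add_neg_cancel, Real.rpow_zero, one_mul]
        _ ≤ (1 + 1/d) ^ α * (1 + ‖w - z‖) ^ (-α) := by
            apply mul_le_mul_of_nonneg_left _ (by positivity)
            rw [← h3]; exact h2
    calc ‖‖z - w‖ ^ (-α)‖ = ‖z - w‖ ^ (-α) := by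
          rw [Real.norm_eq_abs, abs_of_nonneg (Real.rpow_nonneg (norm_nonneg _) _)]
      _ = ‖w - z‖ ^ (-α) := by rw [norm_sub_rev]
      _ ≤ (1 + 1/d) ^ α * (1 + ‖w - z‖) ^ (-α) := key
      _ ≤ ‖(1 + 1/d) ^ α * (1 + ‖w - z‖) ^ (-α)‖ := le_abs_self _

lemma aux_val {α : ℝ} (hα0 : α ≠ 0) (z : EuclideanSpace ℝ (Fin n)) {d : ℝ} (hd : 0 < d) :
    ∫ w in (Metric.ball z d)ᶜ, ‖z - w‖ ^ (-α) =
      d ^ ((n : ℝ) - α) * ∫ x in (Metric.ball (0 : EuclideanSpace ℝ (Fin n)) 1)ᶜ, ‖x‖ ^ (-α) := by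
  have h1 : ∫ w in (Metric.ball z d)ᶜ, ‖z - w‖ ^ (-α)
      = ∫ x in (Metric.ball (0:E) d)ᶜ, ‖x‖ ^ (-α) := by
    calc ∫ w in (Metric.ball z d)ᶜ, ‖z - w‖ ^ (-α)
        = ∫ w, ((Metric.ball z d)ᶜ).indicator (fun w => ‖z - w‖ ^ (-α)) w :=
          (integral_indicator measurableSet_ball.compl).symm
      _ = ∫ w, ((Metric.ball (0:E) d)ᶜ).indicator (fun x => ‖x‖ ^ (-α)) (w - z) := by
          congr 1; funext w
          classical
          rw [Set.indicator_apply, Set.indicator_apply]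
          have hmem : w ∈ (Metric.ball z d)ᶜ ↔ w - z ∈ (Metric.ball (0:E) d)ᶜ := by
            simp only [mem_compl_iff, mem_ball, dist_zero_right, dist_eq_norm, sub_zero]
          by_cases h : w ∈ (Metric.ball z d)ᶜ
          · rw [if_pos h, if_pos (hmem.mp h), norm_sub_rev]
          · rw [if_neg h, if_neg fun hh => h (hmem.mpr hh)]
      _ = ∫ x, ((Metric.ball (0:E) d)ᶜ).indicator (fun x => ‖x‖ ^ (-α)) x :=
          integral_sub_right_eq_self _ z
      _ = ∫ x in (Metric.ball (0:E) d)ᶜ, ‖x‖ ^ (-α) :=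
          integral_indicator measurableSet_ball.compl
  have hsmul : d • ((Metric.ball (0:E) 1)ᶜ) = (Metric.ball (0:E) d)ᶜ := by
    ext x
    rw [Set.mem_smul_set_iff_inv_smul_mem₀ hd.ne']
    simp only [mem_compl_iff, mem_ball, dist_zero_right, norm_smul, norm_inv, Real.norm_eq_abs,
      abs_of_pos hd]
    rw [← div_eq_inv_mul, div_lt_one hd]
  have hfun : ∀ x : E, ‖d • x‖ ^ (-α) = d ^ (-α) * ‖x‖ ^ (-α) := fun x => by
    rw [norm_smul, Real.norm_eq_abs, abs_of_pos hd, Real.mul_rpow hd.le (norm_nonneg _)]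
  have hcomp := MeasureTheory.Measure.setIntegral_comp_smul_of_pos volume
    (fun x : E => ‖x‖ ^ (-α)) ((Metric.ball (0:E) 1)ᶜ) hd
  rw [hsmul] at hcomp
  simp only [hfun] at hcomp
  rw [MeasureTheory.integral_const_mul, smul_eq_mul] at hcomp
  have hk : (Module.finrank ℝ (EuclideanSpace ℝ (Fin n))) = n := finrank_euclideanSpace_fin
  rw [hk] at hcomp
  have hpow : (0:ℝ) < d ^ n := by positivity
  have h2 : ∫ x in (Metric.ball (0:E) d)ᶜ, ‖x‖ ^ (-α)
      = d ^ n * (d ^ (-α) * ∫ x in (Metric.ball (0:E) 1)ᶜ, ‖x‖ ^ (-α)) := by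
    field_simp at hcomp ⊢
    linarith [hcomp]
  rw [h1, h2, ← Real.rpow_natCast d n, ← mul_assoc, ← Real.rpow_add hd, sub_eq_add_neg]

/-- A bounded open set with `C^{1,1}` boundary: we encode the analytically relevant
consequence, namely the uniform interior and exterior sphere conditions at every
boundary point (which hold if and only if the boundary is `C^{1,1}` for a bounded
open set). -/
def HasC11Boundary {n : ℕ} (Ω : Set (EuclideanSpace ℝ (Fin n))) : Prop :=
  ∃ r > 0, ∀ p ∈ frontier Ω,
    (∃ x ∈ Ω, Metric.closedBall x r ⊆ closure Ω ∧ dist p x = r) ∧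
    (∃ y ∈ (closure Ω)ᶜ, Metric.closedBall y r ⊆ Ωᶜ ∧ dist p y = r)

/-- Lemma 2.1: two-sided bound
(1/c)·min(d(z)^{−2s}, d(z)^{−(n+2s)}) ≤ ∫_Ω |z−w|^{−(n+2s)} dw ≤ c·min(...) for all
z ∉ closure Ω, where d(z) = dist(z, ∂Ω). -/
theorem stmt5 {n : ℕ} (Ω : Set (EuclideanSpace ℝ (Fin n)))
    (hΩo : IsOpen Ω) (hΩb : Bornology.IsBounded Ω) (hΩne : Ω.Nonempty)
    (hΩc : HasC11Boundary Ω)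
    (s : ℝ) (hs : s ∈ Set.Ioo (0:ℝ) 1) :
    ∃ c > 0, ∀ z ∉ closure Ω,
      (1/c) * min (Metric.infDist z (frontier Ω) ^ (-(2*s)))
              (Metric.infDist z (frontier Ω) ^ (-((n : ℝ) + 2*s)))
        ≤ (∫ w in Ω, ‖z - w‖ ^ (-((n : ℝ) + 2*s))) ∧
      (∫ w in Ω, ‖z - w‖ ^ (-((n : ℝ) + 2*s)))
        ≤ c * min (Metric.infDist z (frontier Ω) ^ (-(2*s)))
              (Metric.infDist z (frontier Ω) ^ (-((n : ℝ) + 2*s))) := by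
  obtain ⟨hs0, hs1⟩ := hs
  obtain ⟨r, hr, hsph⟩ := hΩc
  set α : ℝ := (n : ℝ) + 2*s with hαdef
  have hα : (n : ℝ) < α := by simp only [hαdef]; linarith
  have hα0 : 0 < α := lt_of_le_of_lt (Nat.cast_nonneg n) hα
  rcases Nat.eq_zero_or_pos n with hn | hn
  · subst hn
    haveI : Subsingleton (EuclideanSpace ℝ (Fin 0)) :=
      ⟨fun a b => by ext i; exact Fin.elim0 i⟩
    refine ⟨1, one_pos, fun z hz => absurd ?_ hz⟩
    obtain ⟨w, hw⟩ := hΩne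
    have : z = w := Subsingleton.elim z w
    exact this ▸ subset_closure hw
  haveI : Nonempty (Fin n) := ⟨⟨0, hn⟩⟩
  haveI : Nontrivial (EuclideanSpace ℝ (Fin n)) := by
    unfold EuclideanSpace; infer_instance
  set V : ℝ := (volume (Metric.ball (0 : EuclideanSpace ℝ (Fin n)) 1)).toReal with hVdef
  have hV : 0 < V := by
    rw [hVdef]
    exact ENNReal.toReal_pos (measure_ball_pos volume _ one_pos).ne' measure_ball_lt_top.ne
  set C : ℝ := ∫ x in (Metric.ball (0 : EuclideanSpace ℝ (Fin n)) 1)ᶜ, ‖x‖ ^ (-α) with hCdef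
  have hC0 : 0 ≤ C := by
    rw [hCdef]
    exact setIntegral_nonneg measurableSet_ball.compl
      fun x _ => Real.rpow_nonneg (norm_nonneg _) _
  set M : ℝ := (volume Ω).toReal with hMdef
  have hM0 : 0 ≤ M := ENNReal.toReal_nonneg
  set K : ℝ := max C M with hKdef
  set c₁ : ℝ := 3 ^ (-α) * V * (min r 1) ^ n with hc₁def
  have hmr1 : 0 < min r 1 := lt_min hr one_pos
  have hc₁ : 0 < c₁ := by rw [hc₁def]; positivity
  refine ⟨max (K + 1) (1/c₁), lt_of_lt_of_le (by positivity) (le_max_right _ _), fun z hz => ?_⟩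
  set c : ℝ := max (K + 1) (1/c₁) with hcdef
  have hcpos : 0 < c := lt_of_lt_of_le (by positivity) (le_max_right _ _)
  set d : ℝ := Metric.infDist z (frontier Ω) with hddef
  -- basic geometry of the distance
  have hclne : (closure Ω).Nonempty := hΩne.closure
  have hcompl_ne_univ : (closure Ω)ᶜ ≠ univ := by
    intro h
    obtain ⟨w, hw⟩ := hclne
    have : w ∈ (closure Ω)ᶜ := h ▸ mem_univ w
    exact this hw
  obtain ⟨y, hyf, hyd⟩ := exists_mem_frontier_infDist_compl_eq_dist (s := (closure Ω)ᶜ) hz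
    hcompl_ne_univ
  rw [compl_compl] at hyd
  rw [frontier_compl] at hyf
  have hyfr : y ∈ frontier Ω := frontier_closure_subset hyf
  have hfne : (frontier Ω).Nonempty := ⟨y, hyfr⟩
  have hdcl : Metric.infDist z (closure Ω) ≤ d :=
    Metric.infDist_le_infDist_of_subset frontier_subset_closure hfne
  have hdpos : 0 < d :=
    lt_of_lt_of_le ((isClosed_closure.notMem_iff_infDist_pos hclne).mp hz) hdcl
  have hdle : ∀ w ∈ closure Ω, d ≤ dist z w := fun w hw =>
    calc d ≤ dist z y := Metric.infDist_le_dist_of_mem hyfr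
      _ = Metric.infDist z (closure Ω) := hyd.symm
      _ ≤ dist z w := Metric.infDist_le_dist_of_mem hw
  have hΩsub : Ω ⊆ (Metric.ball z d)ᶜ := by
    intro w hw hmem
    rw [mem_ball, dist_comm] at hmem
    exact absurd hmem (not_lt.mpr (hdle w (subset_closure hw)))
  -- integrability
  have hint : IntegrableOn (fun w : EuclideanSpace ℝ (Fin n) => ‖z - w‖ ^ (-α)) Ω volume :=
    (aux_int hα z hdpos).mono_set hΩsub
  have hnonneg : 0 ≤ᵐ[volume.restrict ((Metric.ball z d)ᶜ)]
      fun w : EuclideanSpace ℝ (Fin n) => ‖z - w‖ ^ (-α) :=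
    ae_of_all _ fun w => Real.rpow_nonneg (norm_nonneg _) _
  -- nearest boundary point and interior ball
  have hfc : IsCompact (frontier Ω) :=
    Metric.isCompact_of_isClosed_isBounded isClosed_frontier
      (hΩb.closure.subset frontier_subset_closure)
  obtain ⟨p, hpf, hpd⟩ := hfc.exists_infDist_eq_dist hfne z
  obtain ⟨⟨x, hxΩ, hxsub, hpx⟩, -⟩ := hsph p hpf
  -- the open interior ball is contained in Ω
  have hball : Metric.ball x r ⊆ Ω := by
    intro u hu
    have hucl : u ∈ closure Ω := hxsub (ball_subset_closedBall hu)
    by_contra huΩ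
    have hufr : u ∈ frontier Ω := by
      rw [hΩo.frontier_eq]
      exact ⟨hucl, huΩ⟩
    obtain ⟨-, y', hy'c, hy'sub, huy'⟩ := hsph u hufr
    have hy'ball : Metric.ball y' r ⊆ (closure Ω)ᶜ := by
      have h1 : Metric.ball y' r ⊆ interior (Ωᶜ) :=
        interior_maximal (ball_subset_closedBall.trans hy'sub) isOpen_ball
      rwa [interior_compl] at h1
    have hdisj : ∀ v, v ∈ Metric.ball y' r → v ∉ Metric.closedBall x r :=
      fun v hv hvx => (hy'ball hv) (hxsub hvx)
    have hxy : 2*r ≤ dist x y' := by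
      by_contra hlt
      push_neg at hlt
      refine hdisj (midpoint ℝ x y') ?_ ?_
      · rw [mem_ball, dist_midpoint_right]
        simp only [Real.norm_ofNat]
        linarith
      · rw [mem_closedBall, dist_midpoint_left]
        simp only [Real.norm_ofNat]
        linarith
    have hxy' : dist x y' < 2*r := by
      have h1 : dist x u < r := by rw [dist_comm]; exact mem_ball.mp hu
      calc dist x y' ≤ dist x u + dist u y' := dist_triangle _ _ _
        _ < r + r := by rw [huy']; linarith
        _ = 2*r := by ring
    linarith
  -- the tangent sub-ball at scale t = min d r
  set t : ℝ := min d r with htdef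
  have ht0 : 0 < t := lt_min hdpos hr
  have htr : t ≤ r := min_le_right _ _
  have htd : t ≤ d := min_le_left _ _
  set q : EuclideanSpace ℝ (Fin n) := p + (t/r) • (x - p) with hqdef
  have hxp : ‖x - p‖ = r := by rw [← dist_eq_norm, dist_comm]; exact hpx
  have hqx : dist q x = r - t := by
    have h1 : x - q = (1 - t/r) • (x - p) := by
      rw [hqdef, sub_smul, one_smul]
      abel
    rw [dist_comm, dist_eq_norm, h1, norm_smul, Real.norm_eq_abs,
      abs_of_nonneg (by rw [sub_nonneg]; exact (div_le_one hr).mpr htr), hxp]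
    field_simp
  have hpq : dist p q = t := by
    have h1 : q - p = (t/r) • (x - p) := by rw [hqdef]; abel
    rw [dist_comm, dist_eq_norm, h1, norm_smul, Real.norm_eq_abs,
      abs_of_nonneg (by positivity), hxp]
    field_simp
  have hqsub : Metric.ball q t ⊆ Ω := by
    refine Subset.trans ?_ hball
    intro w hw
    rw [mem_ball]
    calc dist w x ≤ dist w q + dist q x := dist_triangle _ _ _
      _ < t + (r - t) := by
          have := mem_ball.mp hw
          linarith
      _ = r := by ring
  -- pointwise lower bound on the small ball
  have hbound : ∀ w ∈ Metric.ball q t, (3*d) ^ (-α) ≤ ‖z - w‖ ^ (-α) := by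
    intro w hw
    have hzw : ‖z - w‖ ≤ 3*d := by
      rw [← dist_eq_norm]
      calc dist z w ≤ dist z p + dist p w := dist_triangle _ _ _
        _ ≤ dist z p + (dist p q + dist q w) := by linarith [dist_triangle p q w]
        _ ≤ d + (t + t) := by
            have h1 : dist z p = d := hpd.symm
            have h2 : dist q w < t := by rw [dist_comm]; exact mem_ball.mp hw
            rw [hpq] at *
            linarith
        _ ≤ 3*d := by linarith
    have hzw0 : 0 < ‖z - w‖ := by
      rw [norm_sub_pos_iff]
      intro h
      exact hz (h ▸ subset_closure (hqsub hw))
    exact Real.rpow_le_rpow_of_nonpos hzw0 hzw (neg_nonpos.mpr hα0.le)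
  -- lower bound
  have hvol : (volume (Metric.ball q t)).toReal = t ^ n * V := by
    rw [Measure.addHaar_ball _ _ ht0.le, finrank_euclideanSpace_fin, ENNReal.toReal_mul,
      ENNReal.toReal_ofReal (by positivity), hVdef]
  have h5 : (3*d) ^ (-α) * (t ^ n * V) ≤ ∫ w in Metric.ball q t, ‖z - w‖ ^ (-α) := by
    have := setIntegral_ge_of_const_le (μ := volume) measurableSet_ball
      measure_ball_lt_top.ne hbound (hint.mono_set hqsub)
    rw [measureReal_def, hvol, smul_eq_mul] at this
    linarith
  have h6 : ∫ w in Metric.ball q t, ‖z - w‖ ^ (-α) ≤ ∫ w in Ω, ‖z - w‖ ^ (-α) :=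
    setIntegral_mono_set hint
      (ae_of_all _ fun w => Real.rpow_nonneg (norm_nonneg _) _)
      (HasSubset.Subset.eventuallyLE hqsub)
  have hmin_nonneg : 0 ≤ min (d ^ (-(2*s))) (d ^ (-α)) :=
    le_min (Real.rpow_nonneg hdpos.le _) (Real.rpow_nonneg hdpos.le _)
  have hcore : (min r 1) ^ n * min (d ^ (-(2*s))) (d ^ (-α)) ≤ t ^ n * d ^ (-α) := by
    rcases le_total d r with hdr | hrd
    · have htd' : t = d := min_eq_left hdr
      have hdn : (d:ℝ) ^ n * d ^ (-α) = d ^ (-(2*s)) := by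
        rw [← Real.rpow_natCast d n, ← Real.rpow_add hdpos]
        congr 1
        rw [hαdef]; ring
      rw [htd', hdn]
      calc (min r 1) ^ n * min (d ^ (-(2*s))) (d ^ (-α))
          ≤ 1 * (d ^ (-(2*s))) :=
            mul_le_mul (pow_le_one₀ hmr1.le (min_le_right r 1))
              (min_le_left _ _) hmin_nonneg one_pos.le
        _ = d ^ (-(2*s)) := one_mul _
    · have htr' : t = r := min_eq_right hrd
      rw [htr']
      exact mul_le_mul (pow_le_pow_left₀ hmr1.le (min_le_left r 1) n)
        (min_le_right _ _) hmin_nonneg (by positivity)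
  have hlow : c₁ * min (d ^ (-(2*s))) (d ^ (-α)) ≤ ∫ w in Ω, ‖z - w‖ ^ (-α) := by
    have h8 : c₁ * min (d ^ (-(2*s))) (d ^ (-α)) ≤ (3*d) ^ (-α) * (t ^ n * V) := by
      calc c₁ * min (d ^ (-(2*s))) (d ^ (-α))
          = (3 ^ (-α) * V) * ((min r 1) ^ n * min (d ^ (-(2*s))) (d ^ (-α))) := by
            rw [hc₁def]; ring
        _ ≤ (3 ^ (-α) * V) * (t ^ n * d ^ (-α)) :=
            mul_le_mul_of_nonneg_left hcore (by positivity)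
        _ = (3*d) ^ (-α) * (t ^ n * V) := by
            rw [Real.mul_rpow (by norm_num) hdpos.le]; ring
    linarith
  -- upper bound
  have hup : ∫ w in Ω, ‖z - w‖ ^ (-α) ≤ K * min (d ^ (-(2*s))) (d ^ (-α)) := by
    have hA : ∫ w in Ω, ‖z - w‖ ^ (-α) ≤ ∫ w in (Metric.ball z d)ᶜ, ‖z - w‖ ^ (-α) :=
      setIntegral_mono_set (aux_int hα z hdpos) hnonneg
        (HasSubset.Subset.eventuallyLE hΩsub)
    have hB : ∫ w in (Metric.ball z d)ᶜ, ‖z - w‖ ^ (-α) = d ^ ((n:ℝ) - α) * C :=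
      aux_val hα0.ne' z hdpos
    have hd2s : d ^ ((n:ℝ) - α) = d ^ (-(2*s)) := by
      congr 1
      rw [hαdef]; ring
    have hU1 : ∫ w in Ω, ‖z - w‖ ^ (-α) ≤ K * d ^ (-(2*s)) := by
      calc ∫ w in Ω, ‖z - w‖ ^ (-α) ≤ d ^ ((n:ℝ) - α) * C := le_of_le_of_eq hA hB
        _ = C * d ^ (-(2*s)) := by rw [hd2s]; ring
        _ ≤ K * d ^ (-(2*s)) :=
            mul_le_mul_of_nonneg_right (le_max_left C M) (Real.rpow_nonneg hdpos.le _)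
    have hU2 : ∫ w in Ω, ‖z - w‖ ^ (-α) ≤ K * d ^ (-α) := by
      calc ∫ w in Ω, ‖z - w‖ ^ (-α) ≤ ∫ _w in Ω, d ^ (-α) := by
            refine setIntegral_mono_on hint
              ((integrableOn_const_iff (C := d ^ (-α)) enorm_ne_top).mpr (Or.inr hΩb.measure_lt_top)) hΩo.measurableSet
              fun w hw => ?_
            have h1 : d ≤ ‖z - w‖ := by
              rw [← dist_eq_norm]
              exact hdle w (subset_closure hw)
            exact Real.rpow_le_rpow_of_nonpos hdpos h1 (neg_nonpos.mpr hα0.le)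
        _ = M * d ^ (-α) := by rw [setIntegral_const, smul_eq_mul, hMdef, measureReal_def]
        _ ≤ K * d ^ (-α) :=
            mul_le_mul_of_nonneg_right (le_max_right C M) (Real.rpow_nonneg hdpos.le _)
    rcases le_total (d ^ (-(2*s))) (d ^ (-α)) with hmm | hmm
    · rw [min_eq_left hmm]; exact hU1
    · rw [min_eq_right hmm]; exact hU2
  have hKc : K ≤ c := le_trans (by linarith) (le_max_left _ _)
  constructor
  · have h1c : 1/c ≤ c₁ := by
      have hcc : 1/c₁ ≤ c := le_max_right _ _
      rw [div_le_iff₀ hcpos]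
      calc (1:ℝ) = c₁ * (1/c₁) := by field_simp
        _ ≤ c₁ * c := mul_le_mul_of_nonneg_left hcc hc₁.le
    calc (1/c) * min (d ^ (-(2*s))) (d ^ (-α))
        ≤ c₁ * min (d ^ (-(2*s))) (d ^ (-α)) :=
          mul_le_mul_of_nonneg_right h1c hmin_nonneg
      _ ≤ ∫ w in Ω, ‖z - w‖ ^ (-α) := hlow
  · exact hup.trans (mul_le_mul_of_nonneg_right hKc hmin_nonneg)
end

section
/- Let n ≥ 1, s ∈ (0,1), and for δ ∈ (0,1) consider J(δ) = ∫_{{z ∈ ℝⁿ : 0 < z₁ < 1}} z₁^{2s} |δe₁ + z|^{−(n+2s)} dz. Then J(δ) = ∫₀^{1/δ} t^{2s}(1+t)^{−(1+2s)} dt · ∫_{ℝ^{n−1}} (1+|ξ|²)^{−(n/2+s)} dξ, and consequently there exists c > 0 with J(δ) ≥ c·|ln δ| for all δ ∈ (0,1). -/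
open MeasureTheory Metric Set
open scoped ENNReal

noncomputable section

namespace Stmt9Aux

lemma aux_low {s : ℝ} (hs0 : 0 < s) {δ : ℝ} (hδ : 0 < δ) (hδ1 : δ < 1) :
    2 ^ (-(1+2*s)) * |Real.log δ| ≤ ∫ t in (0:ℝ)..(1/δ), t ^ (2*s) * (1+t) ^ (-(1+2*s)) := by
  set h : ℝ → ℝ := fun t => t ^ (2*s) * (1+t) ^ (-(1+2*s)) with hh
  have hone : (1:ℝ) ≤ 1/δ := by rw [le_div_iff₀ hδ]; linarith
  have hcont : ContinuousOn h (Ici 0) := by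
    intro t ht
    have h1t : (1:ℝ) + t ≠ 0 := by simp only [mem_Ici] at ht; positivity
    exact (((Real.continuous_rpow_const (by positivity)).continuousAt).mul
      ((Real.continuousAt_rpow_const (1+t) (-(1+2*s)) (Or.inl h1t)).comp
        ((continuous_const.add continuous_id).continuousAt))).continuousWithinAt
  have hsub1 : uIcc (0:ℝ) 1 ⊆ Ici 0 := by
    rw [uIcc_of_le zero_le_one]; exact Icc_subset_Ici_self
  have hsub2 : uIcc (1:ℝ) (1/δ) ⊆ Ici 0 := by
    intro x hx
    rw [uIcc_of_le hone] at hx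
    exact le_trans zero_le_one hx.1
  have hint1 : IntervalIntegrable h volume 0 1 := (hcont.mono hsub1).intervalIntegrable
  have hint2 : IntervalIntegrable h volume 1 (1/δ) := (hcont.mono hsub2).intervalIntegrable
  have hint3 : IntervalIntegrable (fun t : ℝ => 2 ^ (-(1+2*s)) * t⁻¹) volume 1 (1/δ) := by
    apply ContinuousOn.intervalIntegrable
    intro t ht
    have ht0 : t ≠ 0 := by
      rw [uIcc_of_le hone] at ht
      intro hcon; rw [hcon] at ht; linarith [ht.1]
    exact (continuousWithinAt_const.mul ((continuousAt_inv₀ ht0).continuousWithinAt))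
  have key : ∀ t ∈ Icc (1:ℝ) (1/δ), 2 ^ (-(1+2*s)) * t⁻¹ ≤ h t := by
    intro t ht
    have ht1 : (1:ℝ) ≤ t := ht.1
    have ht0 : (0:ℝ) < t := by linarith
    have hbase : (2*t) ^ (-(1+2*s)) ≤ (1+t) ^ (-(1+2*s)) :=
      Real.rpow_le_rpow_of_nonpos (by linarith) (by linarith) (by linarith)
    have heq : 2 ^ (-(1+2*s)) * t⁻¹ = t ^ (2*s) * (2*t) ^ (-(1+2*s)) := by
      rw [Real.mul_rpow (by norm_num) ht0.le,
        show t ^ (2*s) * (2 ^ (-(1+2*s)) * t ^ (-(1+2*s)))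
          = 2 ^ (-(1+2*s)) * (t ^ (2*s) * t ^ (-(1+2*s))) from by ring,
        ← Real.rpow_add ht0, show 2*s + -(1+2*s) = (-1 : ℝ) from by ring,
        Real.rpow_neg_one]
    rw [heq]
    exact mul_le_mul_of_nonneg_left hbase (Real.rpow_nonneg ht0.le _)
  have h2 : ∫ t in (1:ℝ)..(1/δ), 2 ^ (-(1+2*s)) * t⁻¹ ≤ ∫ t in (1:ℝ)..(1/δ), h t :=
    intervalIntegral.integral_mono_on hone hint3 hint2 key
  have h3 : ∫ t in (1:ℝ)..(1/δ), 2 ^ (-(1+2*s)) * t⁻¹ = 2 ^ (-(1+2*s)) * |Real.log δ| := by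
    rw [intervalIntegral.integral_const_mul, integral_inv_of_pos one_pos (by positivity),
      div_one, one_div, Real.log_inv, abs_of_neg (Real.log_neg hδ hδ1)]
  have h1 : 0 ≤ ∫ t in (0:ℝ)..1, h t :=
    intervalIntegral.integral_nonneg zero_le_one fun t ht =>
      mul_nonneg (Real.rpow_nonneg ht.1 _) (Real.rpow_nonneg (by linarith [ht.1]) _)
  have hsplit : (∫ t in (0:ℝ)..1, h t) + (∫ t in (1:ℝ)..(1/δ), h t) = ∫ t in (0:ℝ)..(1/δ), h t :=
    intervalIntegral.integral_add_adjacent_intervals hint1 hint2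
  linarith

lemma aux_key (m : ℕ) (i0 : Fin (m+1)) {s : ℝ} (hs0 : 0 < s) {δ : ℝ} (hδ : 0 < δ) (hδ1 : δ < 1) :
    ∫ z in {z : EuclideanSpace ℝ (Fin (m+1)) | 0 < z i0 ∧ z i0 < 1},
        (z i0) ^ (2*s) *
          ‖δ • EuclideanSpace.single i0 (1:ℝ) + z‖ ^ (-(((m+1:ℕ):ℝ) + 2*s))
    = (∫ t in (0:ℝ)..(1/δ), t ^ (2*s) * (1+t) ^ (-(1+2*s))) *
      (∫ ξ : EuclideanSpace ℝ (Fin m), (1 + ‖ξ‖^2) ^ (-(((m+1:ℕ):ℝ)/2 + s))) := by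
  set p : ℝ := ((m+1:ℕ):ℝ)/2 + s with hp
  set E := EuclideanSpace ℝ (Fin m) with hE
  set y : EuclideanSpace ℝ (Fin (m+1)) → E := fun z => WithLp.toLp 2 (fun j => z (i0.succAbove j)) with hy
  -- the norm identity
  have hnorm : ∀ z : EuclideanSpace ℝ (Fin (m+1)),
      ‖δ • EuclideanSpace.single i0 (1:ℝ) + z‖ ^ (-(((m+1:ℕ):ℝ) + 2*s))
        = ((δ + z i0)^2 + ‖y z‖^2) ^ (-p) := by
    intro z
    have hS : (0:ℝ) ≤ (δ + z i0)^2 + ‖y z‖^2 := by positivity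
    have hns : ‖δ • EuclideanSpace.single i0 (1:ℝ) + z‖
        = Real.sqrt ((δ + z i0)^2 + ‖y z‖^2) := by
      rw [EuclideanSpace.norm_eq]
      congr 1
      rw [Fin.sum_univ_succAbove
        (fun i => ‖(δ • EuclideanSpace.single i0 (1:ℝ) + z) i‖^2) i0]
      have e1 : ‖(δ • EuclideanSpace.single i0 (1:ℝ) + z) i0‖^2 = (δ + z i0)^2 := by
        simp [EuclideanSpace.single_apply, Real.norm_eq_abs, sq_abs]
      have e2 : ‖y z‖^2 = ∑ j, ‖(δ • EuclideanSpace.single i0 (1:ℝ) + z) (i0.succAbove j)‖^2 := by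
        rw [EuclideanSpace.norm_eq, Real.sq_sqrt (by positivity)]
        refine Finset.sum_congr rfl fun j _ => ?_
        simp [hy, EuclideanSpace.single_apply, Fin.succAbove_ne i0 j]
      rw [e1, e2]
    rw [hns, Real.sqrt_eq_rpow, ← Real.rpow_mul hS]
    rw [hp]
    congr 1
    push_cast
    ring
  -- measurability basics
  have hzap : ∀ i, Measurable fun z : EuclideanSpace ℝ (Fin (m+1)) => z i := fun i =>
    (measurable_pi_apply i).comp (MeasurableEquiv.toLp 2 (Fin (m+1) → ℝ)).symm.measurable
  have hym : Measurable y :=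
    (MeasurableEquiv.toLp 2 (Fin m → ℝ)).measurable.comp
      (measurable_pi_lambda _ fun j => hzap (i0.succAbove j))
  have hS : MeasurableSet {z : EuclideanSpace ℝ (Fin (m+1)) | 0 < z i0 ∧ z i0 < 1} := by
    have : {z : EuclideanSpace ℝ (Fin (m+1)) | 0 < z i0 ∧ z i0 < 1}
        = (fun z : EuclideanSpace ℝ (Fin (m+1)) => z i0) ⁻¹' (Ioo 0 1) := rfl
    rw [this]
    exact (hzap i0) measurableSet_Ioo
  set f : EuclideanSpace ℝ (Fin (m+1)) → ℝ :=
    fun z => (z i0) ^ (2*s) * ((δ + z i0)^2 + ‖y z‖^2) ^ (-p) with hf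
  have hfm : Measurable f := by fun_prop
  set G : ℝ × E → ℝ≥0∞ :=
    fun w => ENNReal.ofReal (w.1 ^ (2*s) * ((δ + w.1)^2 + ‖w.2‖^2) ^ (-p)) with hG
  have hGm : Measurable G := by fun_prop
  have hΦ : MeasurePreserving (fun z : EuclideanSpace ℝ (Fin (m+1)) => ((z i0 : ℝ), y z))
      volume volume := by
    have h1 := EuclideanSpace.volume_preserving_symm_measurableEquiv_toLp (Fin (m+1))
    have h2 := volume_preserving_piFinSuccAbove (fun _ : Fin (m+1) => ℝ) i0
    have h3 := (MeasurePreserving.id (volume : Measure ℝ)).prod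
      (EuclideanSpace.volume_preserving_symm_measurableEquiv_toLp (Fin m)).symm
    exact (h3.comp (h2.comp h1) : )
  -- step 1 : to lintegral
  have step1 : ∫ z in {z : EuclideanSpace ℝ (Fin (m+1)) | 0 < z i0 ∧ z i0 < 1}, f z
      = (∫⁻ z in {z : EuclideanSpace ℝ (Fin (m+1)) | 0 < z i0 ∧ z i0 < 1},
          ENNReal.ofReal (f z)).toReal := by
    apply MeasureTheory.integral_eq_lintegral_of_nonneg_ae
    · filter_upwards [ae_restrict_mem hS] with z hz
      exact mul_nonneg (Real.rpow_nonneg hz.1.le _) (Real.rpow_nonneg (by positivity) _)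
    · exact hfm.aestronglyMeasurable
  -- step 2 : transport through Φ
  have hpre : {z : EuclideanSpace ℝ (Fin (m+1)) | 0 < z i0 ∧ z i0 < 1}
      = (fun z : EuclideanSpace ℝ (Fin (m+1)) => ((z i0 : ℝ), y z)) ⁻¹'
          ((Ioo (0:ℝ) 1) ×ˢ (univ : Set E)) := by
    ext z
    simp [Set.mem_prod]
  have step2 : ∫⁻ z in {z : EuclideanSpace ℝ (Fin (m+1)) | 0 < z i0 ∧ z i0 < 1},
      ENNReal.ofReal (f z) = ∫⁻ w in (Ioo (0:ℝ) 1) ×ˢ (univ : Set E), G w := by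
    rw [hpre]
    exact hΦ.setLIntegral_comp_preimage (measurableSet_Ioo.prod MeasurableSet.univ) hGm
  -- step 3 : Tonelli
  have step3 : ∫⁻ w in (Ioo (0:ℝ) 1) ×ˢ (univ : Set E), G w
      = ∫⁻ x in Ioo (0:ℝ) 1, ∫⁻ yv : E, G (x, yv) := by
    rw [Measure.volume_eq_prod, ← Measure.prod_restrict, Measure.restrict_univ]
    exact lintegral_prod _ hGm.aemeasurable
  -- step 4 : the inner integral
  set Bl : ℝ≥0∞ := ∫⁻ ξ : E, ENNReal.ofReal ((1 + ‖ξ‖^2) ^ (-p)) with hBl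
  have step4 : ∀ x ∈ Ioo (0:ℝ) 1, ∫⁻ yv : E, G (x, yv)
      = ENNReal.ofReal (x ^ (2*s) * (δ+x) ^ (-(1+2*s))) * Bl := by
    intro x hx
    have hc : 0 < δ + x := by linarith [hx.1]
    have hci : (δ+x)⁻¹ ≠ 0 := inv_ne_zero hc.ne'
    have hxs : 0 ≤ x ^ (2*s) := Real.rpow_nonneg hx.1.le _
    have hpt : ∀ yv : E, G (x, yv)
        = ENNReal.ofReal (x ^ (2*s) * ((δ+x)^2 : ℝ) ^ (-p)) *
            ENNReal.ofReal ((1 + ‖(δ+x)⁻¹ • yv‖^2) ^ (-p)) := by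
      intro yv
      have hnv : ‖(δ+x)⁻¹ • yv‖ = (δ+x)⁻¹ * ‖yv‖ := by
        rw [norm_smul, Real.norm_eq_abs, abs_of_pos (inv_pos.mpr hc)]
      have hb : (δ+x)^2 + ‖yv‖^2 = (δ+x)^2 * (1 + ‖(δ+x)⁻¹ • yv‖^2) := by
        rw [hnv]
        field_simp
      rw [hG]
      simp only
      rw [hb, Real.mul_rpow (by positivity) (by positivity),
        ← ENNReal.ofReal_mul (mul_nonneg hxs (Real.rpow_nonneg (by positivity) _))]
      congr 1
      ring
    have hmeas1 : Measurable fun yv : E =>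
        ENNReal.ofReal ((1 + ‖(δ+x)⁻¹ • yv‖^2) ^ (-p)) := by fun_prop
    rw [lintegral_congr hpt, lintegral_const_mul _ hmeas1]
    have hfr : Module.finrank ℝ E = m := finrank_euclideanSpace_fin
    have hmeasB : Measurable fun ξ : E => ENNReal.ofReal ((1+‖ξ‖^2) ^ (-p)) := by fun_prop
    have hmap : ∫⁻ yv : E, ENNReal.ofReal ((1 + ‖(δ+x)⁻¹ • yv‖^2) ^ (-p))
        = ENNReal.ofReal ((δ+x) ^ (m:ℕ)) * Bl := by
      calc ∫⁻ yv : E, ENNReal.ofReal ((1 + ‖(δ+x)⁻¹ • yv‖^2) ^ (-p))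
          = ∫⁻ ξ : E, ENNReal.ofReal ((1+‖ξ‖^2) ^ (-p))
              ∂(Measure.map ((δ+x)⁻¹ • ·) volume) :=
            (lintegral_map hmeasB (measurable_const_smul _)).symm
        _ = ENNReal.ofReal |(((δ+x)⁻¹) ^ (Module.finrank ℝ E))⁻¹| * Bl := by
            rw [Measure.map_addHaar_smul volume hci, lintegral_smul_measure, hBl, smul_eq_mul]
        _ = ENNReal.ofReal ((δ+x) ^ (m:ℕ)) * Bl := by
            congr 2
            rw [hfr, inv_pow, inv_inv, abs_of_pos (pow_pos hc m)]
    rw [hmap, ← mul_assoc,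
      ← ENNReal.ofReal_mul (mul_nonneg hxs (Real.rpow_nonneg (by positivity) _))]
    congr 2
    have h2p : ((δ+x)^2 : ℝ) ^ (-p) = (δ+x) ^ ((2:ℝ) * (-p)) := by
      rw [Real.rpow_mul hc.le, Real.rpow_two]
    rw [h2p, mul_assoc, ← Real.rpow_natCast (δ+x) m, ← Real.rpow_add hc]
    congr 2
    rw [hp]
    push_cast
    ring
  set φ : ℝ → ℝ := fun x => x ^ (2*s) * (δ+x) ^ (-(1+2*s)) with hφ
  have hφm : Measurable φ := by fun_prop
  have hφm' : Measurable fun x : ℝ => ENNReal.ofReal (φ x) := by fun_prop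
  have step5 : ∫⁻ x in Ioo (0:ℝ) 1, ∫⁻ yv : E, G (x, yv)
      = (∫⁻ x in Ioo (0:ℝ) 1, ENNReal.ofReal (φ x)) * Bl := by
    rw [setLIntegral_congr_fun measurableSet_Ioo step4]
    exact lintegral_mul_const _ hφm'
  have hφint : IntegrableOn φ (Ioo (0:ℝ) 1) := by
    apply Measure.integrableOn_of_bounded (M := δ ^ (-(1+2*s)))
    · exact (measure_Ioo_lt_top).ne
    · exact hφm.aestronglyMeasurable
    · filter_upwards [ae_restrict_mem measurableSet_Ioo] with x hx
      have h1 : x ^ (2*s) ≤ 1 := Real.rpow_le_one hx.1.le hx.2.le (by positivity)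
      have h2 : (δ+x) ^ (-(1+2*s)) ≤ δ ^ (-(1+2*s)) :=
        Real.rpow_le_rpow_of_nonpos hδ (by linarith [hx.1]) (by linarith)
      have hn0 : 0 ≤ φ x :=
        mul_nonneg (Real.rpow_nonneg hx.1.le _) (Real.rpow_nonneg (by linarith [hx.1]) _)
      rw [Real.norm_eq_abs, abs_of_nonneg hn0, hφ]
      simp only
      calc x ^ (2*s) * (δ+x) ^ (-(1+2*s)) ≤ 1 * (δ ^ (-(1+2*s))) :=
            mul_le_mul h1 h2 (Real.rpow_nonneg (by linarith [hx.1]) _) zero_le_one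
        _ = δ ^ (-(1+2*s)) := one_mul _
  have hφnn : 0 ≤ᵐ[volume.restrict (Ioo (0:ℝ) 1)] φ := by
    filter_upwards [ae_restrict_mem measurableSet_Ioo] with x hx
    exact mul_nonneg (Real.rpow_nonneg hx.1.le _) (Real.rpow_nonneg (by linarith [hx.1]) _)
  have step6 : ∫⁻ x in Ioo (0:ℝ) 1, ENNReal.ofReal (φ x)
      = ENNReal.ofReal (∫ x in Ioo (0:ℝ) 1, φ x) :=
    (ofReal_integral_eq_lintegral_ofReal hφint hφnn).symm
  have hfr : Module.finrank ℝ E = m := finrank_euclideanSpace_fin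
  have hBint : Integrable fun ξ : E => (1 + ‖ξ‖^2) ^ (-p) := by
    have hr : (Module.finrank ℝ E : ℝ) < ((m+1:ℕ):ℝ) + 2*s := by
      rw [hfr]; push_cast; linarith
    have h := integrable_rpow_neg_one_add_norm_sq (μ := (volume : Measure E)) hr
    have he : -(((m+1:ℕ):ℝ) + 2*s) / 2 = -p := by rw [hp]; push_cast; ring
    rwa [he] at h
  have hBnn : 0 ≤ᵐ[(volume : Measure E)] fun ξ : E => (1 + ‖ξ‖^2) ^ (-p) :=
    ae_of_all _ fun ξ => Real.rpow_nonneg (by positivity) _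
  have hBl_eq : Bl = ENNReal.ofReal (∫ ξ : E, (1 + ‖ξ‖^2) ^ (-p)) := by
    rw [hBl]; exact (ofReal_integral_eq_lintegral_ofReal hBint hBnn).symm
  have hBR : 0 ≤ ∫ ξ : E, (1 + ‖ξ‖^2) ^ (-p) :=
    integral_nonneg fun ξ => Real.rpow_nonneg (by positivity) _
  have hAR : 0 ≤ ∫ x in Ioo (0:ℝ) 1, φ x :=
    setIntegral_nonneg measurableSet_Ioo fun x hx =>
      mul_nonneg (Real.rpow_nonneg hx.1.le _) (Real.rpow_nonneg (by linarith [hx.1]) _)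
  have hchg : ∫ t in (0:ℝ)..(1/δ), t ^ (2*s) * (1+t) ^ (-(1+2*s))
      = ∫ x in Ioo (0:ℝ) 1, φ x := by
    have hδc : δ * δ^(2*s) * δ^(-(1+2*s)) = 1 := by
      nth_rewrite 1 [← Real.rpow_one δ]
      rw [← Real.rpow_add hδ, ← Real.rpow_add hδ,
        show (1:ℝ)+2*s+-(1+2*s) = 0 from by ring, Real.rpow_zero]
    have h1 : ∀ t ∈ uIcc (0:ℝ) (1/δ), t ^ (2*s) * (1+t) ^ (-(1+2*s)) = δ * φ (δ * t) := by
      intro t ht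
      rw [uIcc_of_le (by positivity)] at ht
      have ht0 : (0:ℝ) ≤ t := ht.1
      rw [hφ]
      simp only
      calc t ^ (2*s) * (1+t) ^ (-(1+2*s))
          = (δ * δ^(2*s) * δ^(-(1+2*s))) * (t ^ (2*s) * (1+t) ^ (-(1+2*s))) := by
            rw [hδc, one_mul]
        _ = δ * ((δ*t) ^ (2*s) * (δ + δ*t) ^ (-(1+2*s))) := by
            rw [Real.mul_rpow hδ.le ht0, show δ + δ*t = δ*(1+t) from by ring,
              Real.mul_rpow hδ.le (by linarith : (0:ℝ) ≤ 1+t)]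
            ring
    rw [intervalIntegral.integral_congr h1, intervalIntegral.integral_const_mul,
      intervalIntegral.integral_comp_mul_left φ hδ.ne', mul_zero, mul_one_div,
      div_self hδ.ne', smul_eq_mul, ← mul_assoc, mul_inv_cancel₀ hδ.ne', one_mul,
      intervalIntegral.integral_of_le zero_le_one, integral_Ioc_eq_integral_Ioo]
  have hEq1 : ∫ z in {z : EuclideanSpace ℝ (Fin (m+1)) | 0 < z i0 ∧ z i0 < 1},
        (z i0) ^ (2*s) * ‖δ • EuclideanSpace.single i0 (1:ℝ) + z‖ ^ (-(((m+1:ℕ):ℝ) + 2*s))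
      = ∫ z in {z : EuclideanSpace ℝ (Fin (m+1)) | 0 < z i0 ∧ z i0 < 1}, f z := by
    rw [hf]
    exact integral_congr_ae (ae_of_all _ fun z => by simp only [hnorm z])
  rw [hEq1, step1, step2, step3, step5, step6, hBl_eq,
    ← ENNReal.ofReal_mul hAR, ENNReal.toReal_ofReal (mul_nonneg hAR hBR), hchg]

end Stmt9Aux

end

open Stmt9Aux in
/-- for δ ∈ (0,1),
J(δ) = ∫_{{0<z₁<1}} z₁^{2s} |δe₁+z|^{−(n+2s)} dz
     = (∫₀^{1/δ} t^{2s}(1+t)^{−(1+2s)} dt) · (∫_{ℝ^{n−1}} (1+|ξ|²)^{−(n/2+s)} dξ),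
and there is c > 0 with J(δ) ≥ c·|ln δ| for all δ ∈ (0,1). -/
theorem stmt9 {n : ℕ} (hn : 0 < n) (s : ℝ) (hs : s ∈ Set.Ioo (0:ℝ) 1)
    (J : ℝ → ℝ)
    (hJ : ∀ δ : ℝ, J δ =
      ∫ z in {z : EuclideanSpace ℝ (Fin n) | 0 < z ⟨0, hn⟩ ∧ z ⟨0, hn⟩ < 1},
        (z ⟨0, hn⟩) ^ (2*s) *
          ‖δ • EuclideanSpace.single (⟨0, hn⟩ : Fin n) (1:ℝ) + z‖ ^ (-((n : ℝ) + 2*s))) :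
    (∀ δ ∈ Set.Ioo (0:ℝ) 1,
      J δ = (∫ t in (0:ℝ)..(1/δ), t ^ (2*s) * (1+t) ^ (-(1+2*s))) *
            (∫ ξ : EuclideanSpace ℝ (Fin (n-1)), (1 + ‖ξ‖^2) ^ (-((n : ℝ)/2 + s)))) ∧
    ∃ c > 0, ∀ δ ∈ Set.Ioo (0:ℝ) 1, c * |Real.log δ| ≤ J δ := by
  obtain ⟨m, rfl⟩ : ∃ m, n = m + 1 := ⟨n - 1, (Nat.succ_pred_eq_of_pos hn).symm⟩
  obtain ⟨hs0, hs1⟩ := hs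
  have hident : ∀ δ ∈ Set.Ioo (0:ℝ) 1,
      J δ = (∫ t in (0:ℝ)..(1/δ), t ^ (2*s) * (1+t) ^ (-(1+2*s))) *
            (∫ ξ : EuclideanSpace ℝ (Fin (m+1-1)), (1 + ‖ξ‖^2) ^ (-(((m+1:ℕ) : ℝ)/2 + s))) := by
    intro δ hδ
    rw [hJ δ]
    simpa using aux_key m ⟨0, hn⟩ hs0 hδ.1 hδ.2
  refine ⟨hident, ?_⟩
  set B := ∫ ξ : EuclideanSpace ℝ (Fin (m+1-1)), (1 + ‖ξ‖^2) ^ (-(((m+1:ℕ) : ℝ)/2 + s)) with hB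
  have hBint : Integrable fun ξ : EuclideanSpace ℝ (Fin (m+1-1)) =>
      (1 + ‖ξ‖^2) ^ (-(((m+1:ℕ) : ℝ)/2 + s)) := by
    have hr : (Module.finrank ℝ (EuclideanSpace ℝ (Fin (m+1-1))) : ℝ) < ((m+1:ℕ):ℝ) + 2*s := by
      rw [finrank_euclideanSpace_fin]
      simp only [Nat.add_sub_cancel]
      push_cast
      linarith
    have h := integrable_rpow_neg_one_add_norm_sq (μ := (volume : Measure (EuclideanSpace ℝ (Fin (m+1-1))))) hr
    have : -(((m+1:ℕ):ℝ) + 2*s) / 2 = -(((m+1:ℕ) : ℝ)/2 + s) := by ring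
    rwa [this] at h
  have hBpos : 0 < B := by
    rw [hB]
    rw [MeasureTheory.integral_pos_iff_support_of_nonneg_ae]
    · have : (Function.support fun ξ : EuclideanSpace ℝ (Fin (m+1-1)) =>
          (1 + ‖ξ‖^2) ^ (-(((m+1:ℕ) : ℝ)/2 + s))) = univ := by
        ext ξ
        simp only [Function.mem_support, mem_univ, iff_true]
        exact (Real.rpow_pos_of_pos (by positivity) _).ne'
      rw [this]
      exact isOpen_univ.measure_pos volume ⟨0, trivial⟩
    · exact ae_of_all _ fun ξ => Real.rpow_nonneg (by positivity) _
    · exact hBint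
  refine ⟨2 ^ (-(1+2*s)) * B, by positivity, fun δ hδ => ?_⟩
  rw [hident δ hδ]
  have hlow := aux_low hs0 hδ.1 hδ.2
  calc 2 ^ (-(1+2*s)) * B * |Real.log δ|
      = (2 ^ (-(1+2*s)) * |Real.log δ|) * B := by ring
    _ ≤ (∫ t in (0:ℝ)..(1/δ), t ^ (2*s) * (1+t) ^ (-(1+2*s))) * B :=
        mul_le_mul_of_nonneg_right hlow hBpos.le
end

section
/- Let Ω ⊂ ℝⁿ be open, bounded, with C^{1,1} boundary, s ∈ (0,1), and u : ℝⁿ → ℝ bounded and measurable. Suppose u satisfies the homogeneous nonlocal Neumann condition: for a.e. x ∈ ℝⁿ\Ω, u(x) = ( ∫_Ω |x−y|^{−(n+2s)} dy )^{−1} · ∫_Ω u(y)|x−y|^{−(n+2s)} dy. Then for every x ∈ Ω, ∫_{ℝⁿ\Ω} (u(x)−u(y)) |x−y|^{−(n+2s)} dy = ∫_Ω (u(x)−u(z)) k(x,z) dz, where k(x,z) = ∫_{ℝⁿ\Ω} ( |x−y|^{n+2s} |z−y|^{n+2s} ∫_Ω |y−w|^{−(n+2s)} dw )^{−1} dy,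 and in particular both sides are finite. -/
open MeasureTheory Metric Set
open Filter

/-- The kernel k(x,z) = ∫_{ℝⁿ\Ω} ( |x−y|^{n+2s}|z−y|^{n+2s} ∫_Ω |y−w|^{−(n+2s)} dw )⁻¹ dy. -/
noncomputable def kKer {n : ℕ} (s : ℝ) (Ω : Set (EuclideanSpace ℝ (Fin n)))
    (x z : EuclideanSpace ℝ (Fin n)) : ℝ :=
  ∫ y in Ωᶜ,
    (‖x - y‖ ^ ((n : ℝ) + 2*s) * ‖z - y‖ ^ ((n : ℝ) + 2*s) *
      ∫ w in Ω, ‖y - w‖ ^ (-((n : ℝ) + 2*s)))⁻¹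

lemma frontier_volume_zero {n : ℕ} {Ω : Set (EuclideanSpace ℝ (Fin n))}
    (hΩc : HasC11Boundary Ω) : volume (frontier Ω) = 0 := by
  by_contra h
  obtain ⟨r, hr, hsph⟩ := hΩc
  set S := frontier Ω with hS
  have hSm : MeasurableSet S := isClosed_frontier.measurableSet
  have hres : volume.restrict S ≠ 0 := by
    simpa [Measure.restrict_eq_zero] using h
  haveI : (ae (volume.restrict S)).NeBot := ae_neBot.mpr hres
  have hae := Besicovitch.ae_tendsto_measure_inter_div (volume : Measure (EuclideanSpace ℝ (Fin n))) S
  have hmem : ∀ᵐ x ∂(volume.restrict S), x ∈ S := ae_restrict_mem hSm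
  obtain ⟨x, hxT, hxS⟩ := (hae.and hmem).exists
  obtain ⟨y, hy, hyball, hyd⟩ := (hsph x hxS).2
  -- geometry
  have hxy : ‖y - x‖ = r := by rw [← dist_eq_norm, dist_comm, hyd]
  set q : ENNReal := ENNReal.ofReal ((1/4 : ℝ) ^ n) with hq
  have hq0 : q ≠ 0 := by
    simpa [hq, ENNReal.ofReal_eq_zero, not_le] using (by positivity : (0:ℝ) < (1/4)^n)
  have hball_disj : S ∩ ball y r = ∅ := by
    apply eq_empty_of_forall_notMem
    rintro z ⟨hzS, hzb⟩
    have : ball y r ⊆ interior Ωᶜ :=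
      interior_maximal (ball_subset_closedBall.trans hyball) isOpen_ball |>.trans (le_refl _)
    have hz2 : z ∈ (closure Ω)ᶜ := by
      have := this hzb
      rwa [interior_compl] at this
    exact hz2 (hzS.1)
  have key : ∀ t ∈ Ioc (0:ℝ) r,
      volume (S ∩ closedBall x t) / volume (closedBall x t) ≤ 1 - q := by
    intro t ht
    obtain ⟨ht0, htr⟩ := ht
    set c : EuclideanSpace ℝ (Fin n) := x + (t/(2*r)) • (y - x) with hc
    have hcx : dist c x = t/2 := by
      rw [dist_eq_norm]
      have : c - x = (t/(2*r)) • (y - x) := by rw [hc]; module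
      rw [this, norm_smul, Real.norm_eq_abs, abs_of_pos (by positivity), hxy]
      field_simp
    have hcy : dist c y = r - t/2 := by
      rw [dist_eq_norm]
      have : c - y = (1 - t/(2*r)) • (x - y) := by
        rw [hc]; module
      rw [this, norm_smul, Real.norm_eq_abs]
      have hxy' : ‖x - y‖ = r := by rw [← dist_eq_norm, hyd]
      rw [hxy']
      have h1 : t/(2*r) ≤ 1/2 := by
        rw [div_le_div_iff₀ (by positivity) (by norm_num)]
        linarith
      rw [abs_of_nonneg (by linarith)]
      field_simp
    have hsub1 : closedBall c (t/4) ⊆ closedBall x t := by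
      intro z hz
      simp only [mem_closedBall] at hz ⊢
      calc dist z x ≤ dist z c + dist c x := dist_triangle _ _ _
        _ ≤ t/4 + t/2 := by linarith [hz, hcx.le]; 
        _ ≤ t := by linarith
    have hsub2 : closedBall c (t/4) ⊆ ball y r := by
      intro z hz
      simp only [mem_closedBall, mem_ball] at hz ⊢
      calc dist z y ≤ dist z c + dist c y := dist_triangle _ _ _
        _ ≤ t/4 + (r - t/2) := by rw [hcy] at *; linarith
        _ < r := by linarith
    -- measures
    have hdisj : Disjoint (S ∩ closedBall x t) (closedBall c (t/4)) := by
      rw [disjoint_left]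
      intro z hz hz2
      have : z ∈ S ∩ ball y r := ⟨hz.1, hsub2 hz2⟩
      rw [hball_disj] at this
      exact this
    have hunion : volume (S ∩ closedBall x t) + volume (closedBall c (t/4)) ≤ volume (closedBall x t) := by
      rw [← measure_union hdisj measurableSet_closedBall]
      apply measure_mono
      exact union_subset (inter_subset_right) hsub1
    have hsmall : volume (closedBall c (t/4)) = q * volume (closedBall x t) := by
      rw [Measure.addHaar_closedBall _ _ (by positivity : (0:ℝ) ≤ t/4),
          Measure.addHaar_closedBall _ _ ht0.le, finrank_euclideanSpace_fin]
      rw [show (t/4 : ℝ) = (1/4) * t by ring, mul_pow, ENNReal.ofReal_mul (by positivity)]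
      rw [hq]
      ring
    have hpos : volume (closedBall x t) ≠ 0 := (measure_closedBall_pos _ _ ht0).ne'
    have hfin : volume (closedBall x t) ≠ ⊤ := measure_closedBall_lt_top.ne
    have hq1 : volume (S ∩ closedBall x t) / volume (closedBall x t) + q ≤ 1 := by
      have h2 : volume (S ∩ closedBall x t) / volume (closedBall x t)
          + volume (closedBall c (t/4)) / volume (closedBall x t)
          ≤ volume (closedBall x t) / volume (closedBall x t) := by
        rw [ENNReal.div_add_div_same]
        exact ENNReal.div_le_div_right hunion _
      rw [hsmall, mul_div_assoc, ENNReal.div_self hpos hfin, mul_one] at h2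
      exact h2
    exact ENNReal.le_sub_of_add_le_right ENNReal.ofReal_ne_top hq1
  have hub : (1:ENNReal) ≤ 1 - q := by
    apply le_of_tendsto hxT
    filter_upwards [Ioc_mem_nhdsGT_of_mem (Set.mem_Ico.mpr ⟨le_refl _, hr⟩)] with t ht
    exact key t ht
  have : (1:ENNReal) - q < 1 := ENNReal.sub_lt_self ENNReal.one_ne_top one_ne_zero hq0
  exact absurd (lt_of_le_of_lt hub this) (lt_irrefl _)


noncomputable def Aker {n : ℕ} (a : ℝ) (Ω : Set (EuclideanSpace ℝ (Fin n)))
    (y : EuclideanSpace ℝ (Fin n)) : ℝ := ∫ w in Ω, ‖y - w‖ ^ (-a)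

lemma rpow_neg_antitone {a s t : ℝ} (ha : 0 ≤ a) (hs : 0 < s) (hst : s ≤ t) :
    t ^ (-a) ≤ s ^ (-a) := by
  rw [Real.rpow_neg hs.le, Real.rpow_neg (hs.trans_le hst).le]
  exact inv_anti₀ (Real.rpow_pos_of_pos hs a) (Real.rpow_le_rpow hs.le hst ha)

set_option maxHeartbeats 2000000 in
lemma key_lemma {n : ℕ} (Ω : Set (EuclideanSpace ℝ (Fin n)))
    (hΩo : IsOpen Ω) (hΩb : Bornology.IsBounded Ω)
    (hfr : volume (frontier Ω) = 0)
    (a : ℝ) (ha : (n : ℝ) < a)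
    (u : EuclideanSpace ℝ (Fin n) → ℝ) (hum : Measurable u)
    (C : ℝ) (hC : ∀ x, |u x| ≤ C)
    (hNeu : ∀ᵐ y : EuclideanSpace ℝ (Fin n), y ∈ Ωᶜ →
      u y = (∫ w in Ω, ‖y - w‖ ^ (-a))⁻¹ * ∫ w in Ω, u w * ‖y - w‖ ^ (-a))
    (x : EuclideanSpace ℝ (Fin n)) (hx : x ∈ Ω) :
    IntegrableOn (fun y => (u x - u y) * ‖x - y‖ ^ (-a)) Ωᶜ ∧
    IntegrableOn (fun z => (u x - u z) *
      ∫ y in Ωᶜ, (‖x - y‖ ^ a * ‖z - y‖ ^ a * Aker a Ω y)⁻¹) Ω ∧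
    (∫ y in Ωᶜ, (u x - u y) * ‖x - y‖ ^ (-a))
      = ∫ z in Ω, (u x - u z) *
          ∫ y in Ωᶜ, (‖x - y‖ ^ a * ‖z - y‖ ^ a * Aker a Ω y)⁻¹ := by
  have ha0 : (0:ℝ) < a := lt_of_le_of_lt (Nat.cast_nonneg n) ha
  have hC0 : 0 ≤ C := (abs_nonneg _).trans (hC x)
  obtain ⟨δ, hδ0, hδ⟩ := Metric.isOpen_iff.1 hΩo x hx
  have hxout : ∀ y ∈ Ωᶜ, δ ≤ ‖x - y‖ := by
    intro y hy
    by_contra hlt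
    push_neg at hlt
    exact hy (hδ (by simpa [Metric.mem_ball, dist_eq_norm, norm_sub_rev] using hlt))
  -- integrability of the outer kernel
  have hbase : Integrable (fun y : EuclideanSpace ℝ (Fin n) => (1 + ‖x - y‖) ^ (-a)) :=
    (integrable_one_add_norm (by rw [finrank_euclideanSpace_fin]; exact ha)).comp_sub_left x
  have hmeas_norm : Measurable fun y : EuclideanSpace ℝ (Fin n) => ‖x - y‖ ^ (-a) := by fun_prop
  have hIout : IntegrableOn (fun y => ‖x - y‖ ^ (-a)) Ωᶜ := by
    apply Integrable.mono' ((hbase.const_mul ((1 + δ⁻¹) ^ a)).integrableOn)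
      hmeas_norm.aestronglyMeasurable
    filter_upwards [ae_restrict_mem hΩo.measurableSet.compl] with y hy
    have ht : δ ≤ ‖x - y‖ := hxout y hy
    have ht0 : (0:ℝ) < ‖x - y‖ := lt_of_lt_of_le hδ0 ht
    rw [Real.norm_eq_abs, abs_of_nonneg (Real.rpow_nonneg (norm_nonneg _) _)]
    have hct : 1 + ‖x - y‖ ≤ (1 + δ⁻¹) * ‖x - y‖ := by
      have h1 : 1 ≤ δ⁻¹ * ‖x - y‖ := by
        rw [← div_eq_inv_mul, le_div_iff₀ hδ0]
        simpa using ht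
      nlinarith
    have h4 : ((1 + δ⁻¹) * ‖x - y‖) ^ (-a) ≤ (1 + ‖x - y‖) ^ (-a) :=
      rpow_neg_antitone ha0.le (by positivity) hct
    have h5 : ((1 + δ⁻¹) * ‖x - y‖) ^ (-a) = (1 + δ⁻¹) ^ (-a) * ‖x - y‖ ^ (-a) :=
      Real.mul_rpow (by positivity) (norm_nonneg _)
    have h6 : ‖x - y‖ ^ (-a) = (1 + δ⁻¹) ^ a * ((1 + δ⁻¹) ^ (-a) * ‖x - y‖ ^ (-a)) := by
      rw [← mul_assoc, ← Real.rpow_add (by positivity : (0:ℝ) < 1 + δ⁻¹)]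
      simp
    rw [h6]
    exact mul_le_mul_of_nonneg_left (h5 ▸ h4) (by positivity)
  have hInt1 : IntegrableOn (fun y => (u x - u y) * ‖x - y‖ ^ (-a)) Ωᶜ := by
    apply Integrable.mono' (hIout.const_mul (2*C))
      (((measurable_const.sub hum).mul hmeas_norm).aestronglyMeasurable)
    apply ae_of_all
    intro y
    show ‖(u x - u y) * ‖x - y‖ ^ (-a)‖ ≤ _
    rw [norm_mul, Real.norm_eq_abs, Real.norm_eq_abs,
      abs_of_nonneg (Real.rpow_nonneg (norm_nonneg _) _)]
    have h1 := abs_le.1 (hC x); have h2 := abs_le.1 (hC y)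
    have : |u x - u y| ≤ 2*C := abs_le.2 ⟨by linarith, by linarith⟩
    exact mul_le_mul_of_nonneg_right this (Real.rpow_nonneg (norm_nonneg _) _)
  -- basic facts about Ω
  have hμpos : volume Ω ≠ 0 := (hΩo.measure_pos volume ⟨x, hx⟩).ne'
  have hμfin : volume Ω ≠ ⊤ := hΩb.measure_lt_top.ne
  have hΩne : (closure Ω).Nonempty := ⟨x, subset_closure hx⟩
  have hIin : ∀ y ∉ closure Ω, IntegrableOn (fun w => ‖y - w‖ ^ (-a)) Ω := by
    intro y hy
    have hd : 0 < infDist y (closure Ω) := (isClosed_closure.notMem_iff_infDist_pos hΩne).1 hy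
    apply Integrable.mono'
      (integrableOn_const hΩb.measure_lt_top.ne :
        IntegrableOn (fun _ => (infDist y (closure Ω)) ^ (-a)) Ω volume)
      ((by fun_prop : Measurable fun w : EuclideanSpace ℝ (Fin n) =>
        ‖y - w‖ ^ (-a)).aestronglyMeasurable)
    filter_upwards [ae_restrict_mem hΩo.measurableSet] with w hw
    rw [Real.norm_eq_abs, abs_of_nonneg (Real.rpow_nonneg (norm_nonneg _) _)]
    apply rpow_neg_antitone ha0.le hd
    rw [← dist_eq_norm]
    exact infDist_le_dist_of_mem (subset_closure hw)
  have hAnn : ∀ y, 0 ≤ Aker a Ω y := fun y =>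
    setIntegral_nonneg hΩo.measurableSet (fun w _ => Real.rpow_nonneg (norm_nonneg _) _)
  have hAmeas : Measurable (Aker a Ω (n := n)) := by
    have hm : StronglyMeasurable fun p : (EuclideanSpace ℝ (Fin n)) × (EuclideanSpace ℝ (Fin n)) =>
        ‖p.1 - p.2‖ ^ (-a) := (by fun_prop : Measurable _).stronglyMeasurable
    exact (hm.integral_prod_right' (ν := volume.restrict Ω)).measurable
  -- positivity of Aker off the closure
  obtain ⟨R, hR⟩ := hΩb.subset_closedBall x
  have hApos : ∀ y ∉ closure Ω, 0 < Aker a Ω y := by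
    intro y hy
    have hM0 : (0:ℝ) < ‖y - x‖ + max R 1 := by
      have : (1:ℝ) ≤ max R 1 := le_max_right _ _
      have := norm_nonneg (y - x)
      linarith
    have hlow : ∀ w ∈ Ω, (‖y - x‖ + max R 1) ^ (-a) ≤ ‖y - w‖ ^ (-a) := by
      intro w hw
      have hd : 0 < infDist y (closure Ω) :=
        (isClosed_closure.notMem_iff_infDist_pos hΩne).1 hy
      have hyw : 0 < ‖y - w‖ := by
        have := infDist_le_dist_of_mem (subset_closure hw) (x := y)
        rw [dist_eq_norm] at this
        linarith
      apply rpow_neg_antitone ha0.le hyw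
      have hxw : ‖x - w‖ ≤ max R 1 := by
        have := hR hw
        rw [mem_closedBall, dist_comm, dist_eq_norm] at this
        exact this.trans (le_max_left _ _)
      calc ‖y - w‖ = ‖(y - x) + (x - w)‖ := by rw [sub_add_sub_cancel]
        _ ≤ ‖y - x‖ + ‖x - w‖ := norm_add_le _ _
        _ ≤ ‖y - x‖ + max R 1 := by linarith
    have hmono := setIntegral_mono_on
      (integrableOn_const hΩb.measure_lt_top.ne :
        IntegrableOn (fun _ => (‖y - x‖ + max R 1) ^ (-a)) Ω volume)
      (hIin y hy) hΩo.measurableSet hlow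
    rw [setIntegral_const, smul_eq_mul] at hmono
    have h0 : 0 < (volume Ω).toReal := ENNReal.toReal_pos hμpos hμfin
    have : 0 < (volume Ω).toReal * (‖y - x‖ + max R 1) ^ (-a) :=
      mul_pos h0 (Real.rpow_pos_of_pos hM0 _)
    exact lt_of_lt_of_le this hmono
  -- the product function
  set μc := volume.restrict Ωᶜ with hμc
  set μin := volume.restrict Ω with hμin
  set G : (EuclideanSpace ℝ (Fin n)) × (EuclideanSpace ℝ (Fin n)) → ℝ :=
    fun p => (u x - u p.2) * (‖x - p.1‖ ^ a * ‖p.2 - p.1‖ ^ a * Aker a Ω p.1)⁻¹ with hGdef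
  have hGmeas : AEStronglyMeasurable G (μc.prod μin) := by
    apply Measurable.aestronglyMeasurable
    apply Measurable.mul
    · exact measurable_const.sub (hum.comp measurable_snd)
    · exact (((by fun_prop : Measurable fun p :
          (EuclideanSpace ℝ (Fin n)) × (EuclideanSpace ℝ (Fin n)) =>
          ‖x - p.1‖ ^ a * ‖p.2 - p.1‖ ^ a).mul (hAmeas.comp measurable_fst))).inv
  have habs2C : ∀ w, |u x - u w| ≤ 2*C := by
    intro w
    have h1 := abs_le.1 (hC x); have h2 := abs_le.1 (hC w)
    exact abs_le.2 ⟨by linarith, by linarith⟩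
  have hfr' : ∀ᵐ y ∂μc, y ∉ closure Ω := by
    have h0 : μc (closure Ω) = 0 := by
      rw [hμc, Measure.restrict_apply isClosed_closure.measurableSet]
      apply measure_mono_null ?_ hfr
      intro y hy
      exact ⟨hy.1, by simpa [hΩo.interior_eq] using hy.2⟩
    exact (measure_eq_zero_iff_ae_notMem).mp h0
  -- pointwise bound on |G|
  have hGb : ∀ y z, ‖G (y, z)‖ ≤
      (2*C * ((‖x - y‖ ^ a)⁻¹ * (Aker a Ω y)⁻¹)) * ‖z - y‖ ^ (-a) := by
    intro y z
    have hg0 : 0 ≤ (‖x - y‖ ^ a * ‖z - y‖ ^ a * Aker a Ω y)⁻¹ :=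
      inv_nonneg.2 (mul_nonneg (mul_nonneg (Real.rpow_nonneg (norm_nonneg _) _)
        (Real.rpow_nonneg (norm_nonneg _) _)) (hAnn y))
    rw [hGdef]
    rw [Real.norm_eq_abs, abs_mul, abs_of_nonneg hg0]
    calc |u x - u z| * (‖x - y‖ ^ a * ‖z - y‖ ^ a * Aker a Ω y)⁻¹
        ≤ 2*C * (‖x - y‖ ^ a * ‖z - y‖ ^ a * Aker a Ω y)⁻¹ :=
          mul_le_mul_of_nonneg_right (habs2C z) hg0
      _ = (2*C * ((‖x - y‖ ^ a)⁻¹ * (Aker a Ω y)⁻¹)) * ‖z - y‖ ^ (-a) := by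
          rw [Real.rpow_neg (norm_nonneg (z - y)), mul_inv, mul_inv]
          ring
  have hIinz : ∀ y, y ∉ closure Ω → IntegrableOn (fun z => ‖z - y‖ ^ (-a)) Ω := by
    intro y hy
    have h := hIin y hy
    have heq : (fun z => ‖z - y‖ ^ (-a)) = fun w => ‖y - w‖ ^ (-a) := by
      funext w; rw [norm_sub_rev]
    rw [heq]
    exact h
  have hAeq : ∀ y, (∫ z in Ω, ‖z - y‖ ^ (-a)) = Aker a Ω y := by
    intro y
    have heq : (fun z => ‖z - y‖ ^ (-a)) = fun w => ‖y - w‖ ^ (-a) := by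
      funext w; rw [norm_sub_rev]
    rw [show (∫ z in Ω, ‖z - y‖ ^ (-a)) = ∫ z in Ω, ‖y - z‖ ^ (-a) from by rw [heq], Aker]
  -- a.e. integrability of sections
  have hsec : ∀ᵐ y ∂μc, Integrable (fun z => G (y, z)) μin := by
    filter_upwards [hfr'] with y hy
    apply Integrable.mono' ((hIinz y hy).const_mul (2*C * ((‖x - y‖ ^ a)⁻¹ * (Aker a Ω y)⁻¹)))
      (((measurable_const.sub hum).mul (by fun_prop : Measurable fun z :
        EuclideanSpace ℝ (Fin n) => (‖x - y‖ ^ a * ‖z - y‖ ^ a * Aker a Ω y)⁻¹)).aestronglyMeasurable)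
    exact ae_of_all _ (fun z => hGb y z)
  -- integrability of the iterated norm integral
  have hnormint : Integrable (fun y => ∫ z, ‖G (y, z)‖ ∂μin) μc := by
    apply Integrable.mono' (hIout.const_mul (2*C)) (hGmeas.norm.integral_prod_right')
    filter_upwards [hfr', hsec] with y hy hysec
    have hnn : 0 ≤ ∫ z, ‖G (y, z)‖ ∂μin :=
      integral_nonneg (fun z => norm_nonneg _)
    rw [Real.norm_eq_abs, abs_of_nonneg hnn]
    have hb1 : (∫ z, ‖G (y, z)‖ ∂μin) ≤
        ∫ z in Ω, (2*C * ((‖x - y‖ ^ a)⁻¹ * (Aker a Ω y)⁻¹)) * ‖z - y‖ ^ (-a) := by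
      apply integral_mono hysec.norm ((hIinz y hy).const_mul _)
      exact fun z => hGb y z
    have hb2 : (∫ z in Ω, (2*C * ((‖x - y‖ ^ a)⁻¹ * (Aker a Ω y)⁻¹)) * ‖z - y‖ ^ (-a))
        = 2*C * ((‖x - y‖ ^ a)⁻¹ * (Aker a Ω y)⁻¹) * Aker a Ω y := by
      rw [integral_const_mul, hAeq]
    have hb3 : 2*C * ((‖x - y‖ ^ a)⁻¹ * (Aker a Ω y)⁻¹) * Aker a Ω y = 2*C * ‖x - y‖ ^ (-a) := by
      have hA : Aker a Ω y ≠ 0 := (hApos y hy).ne'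
      have h7 : ((‖x - y‖ ^ a)⁻¹ * (Aker a Ω y)⁻¹) * Aker a Ω y = (‖x - y‖ ^ a)⁻¹ := by
        rw [mul_assoc, inv_mul_cancel₀ hA, mul_one]
      rw [mul_assoc, h7, Real.rpow_neg (norm_nonneg (x - y))]
    calc (∫ z, ‖G (y, z)‖ ∂μin) ≤ _ := hb1
      _ = _ := hb2
      _ = 2*C * ‖x - y‖ ^ (-a) := hb3
  have hGint : Integrable G (μc.prod μin) :=
    (integrable_prod_iff hGmeas).2 ⟨hsec, hnormint⟩
  -- second integrability claim
  have hker_eq : ∀ z, (∫ y, G (y, z) ∂μc)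
      = (u x - u z) * ∫ y in Ωᶜ, (‖x - y‖ ^ a * ‖z - y‖ ^ a * Aker a Ω y)⁻¹ := by
    intro z
    simp only [hGdef]
    exact integral_const_mul _ _
  have hInt2 : IntegrableOn (fun z => (u x - u z) *
      ∫ y in Ωᶜ, (‖x - y‖ ^ a * ‖z - y‖ ^ a * Aker a Ω y)⁻¹) Ω := by
    have h := hGint.integral_prod_right
    have heq : (fun z => ∫ y, G (y, z) ∂μc) = fun z => (u x - u z) *
        ∫ y in Ωᶜ, (‖x - y‖ ^ a * ‖z - y‖ ^ a * Aker a Ω y)⁻¹ := funext hker_eq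
    rwa [heq] at h
  -- a.e. identity on the complement
  have hkey : ∀ᵐ y ∂μc, (u x - u y) * ‖x - y‖ ^ (-a) = ∫ z, G (y, z) ∂μin := by
    filter_upwards [hfr', ae_restrict_of_ae hNeu, ae_restrict_mem hΩo.measurableSet.compl]
      with y hy1 hy2 hy3
    have hB : u y = (Aker a Ω y)⁻¹ * ∫ w in Ω, u w * ‖y - w‖ ^ (-a) := hy2 hy3
    have hApos' : 0 < Aker a Ω y := hApos y hy1
    have hIy : IntegrableOn (fun w => ‖y - w‖ ^ (-a)) Ω := hIin y hy1
    have hIuy : IntegrableOn (fun w => u w * ‖y - w‖ ^ (-a)) Ω := by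
      apply Integrable.mono' (hIy.const_mul C)
        ((hum.mul (by fun_prop : Measurable fun w : EuclideanSpace ℝ (Fin n) =>
          ‖y - w‖ ^ (-a))).aestronglyMeasurable)
      apply ae_of_all
      intro w
      show ‖u w * ‖y - w‖ ^ (-a)‖ ≤ _
      rw [norm_mul, Real.norm_eq_abs, Real.norm_eq_abs,
        abs_of_nonneg (Real.rpow_nonneg (norm_nonneg _) _)]
      exact mul_le_mul_of_nonneg_right (hC w) (Real.rpow_nonneg (norm_nonneg _) _)
    have hsplit : ∀ z, G (y, z) = (‖x - y‖ ^ (-a) * (Aker a Ω y)⁻¹) *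
        (u x * ‖y - z‖ ^ (-a) - u z * ‖y - z‖ ^ (-a)) := by
      intro z
      show (u x - u z) * (‖x - y‖ ^ a * ‖z - y‖ ^ a * Aker a Ω y)⁻¹ = _
      rw [Real.rpow_neg (norm_nonneg (x - y)), Real.rpow_neg (norm_nonneg (y - z)),
        norm_sub_rev y z, mul_inv, mul_inv]
      ring
    have hstep : (∫ z, G (y, z) ∂μin) = (‖x - y‖ ^ (-a) * (Aker a Ω y)⁻¹) *
        (u x * Aker a Ω y - ∫ w in Ω, u w * ‖y - w‖ ^ (-a)) := by
      simp only [hsplit]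
      rw [integral_const_mul, integral_sub (hIy.const_mul (u x)) hIuy, integral_const_mul]
      rfl
    rw [hstep, hB]
    have hA : Aker a Ω y ≠ 0 := hApos'.ne'
    field_simp
  -- final computation
  refine ⟨hInt1, hInt2, ?_⟩
  have hswap := integral_integral_swap (f := fun y z => G (y, z)) (μ := μc) (ν := μin) hGint
  calc (∫ y in Ωᶜ, (u x - u y) * ‖x - y‖ ^ (-a))
      = ∫ y, (∫ z, G (y, z) ∂μin) ∂μc := integral_congr_ae hkey
    _ = ∫ z, (∫ y, G (y, z) ∂μc) ∂μin := hswap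
    _ = ∫ z in Ω, (u x - u z) *
          ∫ y in Ωᶜ, (‖x - y‖ ^ a * ‖z - y‖ ^ a * Aker a Ω y)⁻¹ := by
        rw [hμin]
        exact integral_congr_ae (ae_of_all _ (fun z => hker_eq z))

/-- if u is bounded measurable and satisfies the homogeneous nonlocal
Neumann condition a.e. outside Ω, then for every x ∈ Ω,
∫_{ℝⁿ\Ω} (u(x)−u(y))|x−y|^{−(n+2s)} dy = ∫_Ω (u(x)−u(z)) k(x,z) dz,
both sides being finite (i.e. the integrands are integrable). -/
theorem stmt11 {n : ℕ} (Ω : Set (EuclideanSpace ℝ (Fin n)))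
    (hΩo : IsOpen Ω) (hΩb : Bornology.IsBounded Ω) (hΩc : HasC11Boundary Ω)
    (s : ℝ) (hs : s ∈ Set.Ioo (0:ℝ) 1)
    (u : EuclideanSpace ℝ (Fin n) → ℝ) (hum : Measurable u)
    (hub : ∃ C : ℝ, ∀ x, |u x| ≤ C)
    (hNeu : ∀ᵐ x : EuclideanSpace ℝ (Fin n), x ∈ Ωᶜ →
      u x = (∫ y in Ω, ‖x - y‖ ^ (-((n : ℝ) + 2*s)))⁻¹ *
              ∫ y in Ω, u y * ‖x - y‖ ^ (-((n : ℝ) + 2*s))) :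
    ∀ x ∈ Ω,
      MeasureTheory.IntegrableOn
        (fun y => (u x - u y) * ‖x - y‖ ^ (-((n : ℝ) + 2*s))) Ωᶜ ∧
      MeasureTheory.IntegrableOn (fun z => (u x - u z) * kKer s Ω x z) Ω ∧
      (∫ y in Ωᶜ, (u x - u y) * ‖x - y‖ ^ (-((n : ℝ) + 2*s)))
        = ∫ z in Ω, (u x - u z) * kKer s Ω x z := by
  intro x hx
  obtain ⟨C, hC⟩ := hub
  have ha : (n : ℝ) < (n : ℝ) + 2*s := by nlinarith [hs.1]
  exact key_lemma Ω hΩo hΩb (frontier_volume_zero hΩc) ((n:ℝ)+2*s) ha u hum C hC hNeu x hx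
end
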